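/- arXiv:1304.1887 — 2 statements merged into one kernel-verified Lean document; each statement's English description precedes it below -/
import Mathlib

section
/- Under Assumption (R), the image of a trajectory z_T^⋆ ∈ 𝒳^{T+1} under the CPF kernel P_T^N is unchanged by the choice of the ancestry realization (b_{0:T-1}^⋆, n^⋆) assigned to the frozen trajectory in the initialization: for any (i_0,…,i_T) ∈ {1,…,N}^{T+1}, sampling the remaining N−1 trajectories and ancestors from the conditional of π_T^N given (Z_t^{i_t} = [z_T^⋆]_{t+1} for all t ∈ 0:T, (B_{0:T-1}^⋆, N^⋆) = (i_0,…,i_T)) and then drawing N^⋆ from the multinomial distribution with probabilities W_T^{1:N}(z_T^{1:N}) yields the same law for the output trajectory Z_T^{N^⋆} as when (i_0,…,i_T) = (1,…,1). -/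
open MeasureTheory ProbabilityTheory Filter
open scoped ENNReal Topology

namespace ParticleGibbs

variable {𝒳 : Type*} [MeasurableSpace 𝒳]

/-- Normalised resampling weights `W_t^n`. -/
noncomputable def weight {N : ℕ} (G : 𝒳 → ℝ) (x : Fin N → 𝒳) (n : Fin N) : ℝ :=
  G (x n) / ∑ j, G (x j)

/-- Unnormalised Feynman–Kac path measure `γ_t` on `𝒳^{t+1}`. -/
noncomputable def fk (m0 : Measure 𝒳) (m : ℕ → Kernel 𝒳 𝒳) (G : ℕ → 𝒳 → ℝ) :
    (t : ℕ) → Measure (Fin (t + 1) → 𝒳)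
  | 0 => m0.map fun x => fun _ => x
  | t + 1 =>
      (fk m0 m G t).bind fun z =>
        ENNReal.ofReal (G t (z (Fin.last t))) •
          ((m (t + 1)) (z (Fin.last t))).map fun x => Fin.snoc z x

/-- The Feynman–Kac normalising constant `Z_T`. -/
noncomputable def fkZ (m0 : Measure 𝒳) (m : ℕ → Kernel 𝒳 𝒳) (G : ℕ → 𝒳 → ℝ) (T : ℕ) : ℝ≥0∞ :=
  fk m0 m G T Set.univ

/-- The normalised Feynman–Kac path measure `Q_T`. -/
noncomputable def fkQ (m0 : Measure 𝒳) (m : ℕ → Kernel 𝒳 𝒳) (G : ℕ → 𝒳 → ℝ) (T : ℕ) :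
    Measure (Fin (T + 1) → 𝒳) :=
  (fkZ m0 m G T)⁻¹ • fk m0 m G T

/-- Multinomial selection distribution on labels, with probabilities `W^n`. -/
noncomputable def select {N : ℕ} (G : 𝒳 → ℝ) (x : Fin N → 𝒳) : Measure (Fin N) :=
  ∑ n : Fin N, ENNReal.ofReal (weight G x n) • Measure.dirac n

/-- Multinomial resampling distribution: the ancestors are i.i.d. draws from `select`. -/
noncomputable def multinomialR {N : ℕ} (G : 𝒳 → ℝ) (x : Fin N → 𝒳) :
    Measure (Fin N → Fin N) :=
  Measure.pi fun _ : Fin N => select G x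

/-- The law `θ_T^N` of the interacting particle system (states and ancestor variables). -/
noncomputable def particleLaw (N : ℕ) (m0 : Measure 𝒳) (m : ℕ → Kernel 𝒳 𝒳)
    (R : ℕ → (Fin N → 𝒳) → Measure (Fin N → Fin N)) :
    (t : ℕ) → Measure ((Fin (t + 1) → Fin N → 𝒳) × (Fin t → Fin N → Fin N))
  | 0 => (Measure.pi fun _ : Fin N => m0).map fun x0 => (fun _ => x0, fun i => i.elim0)
  | t + 1 =>
      (particleLaw N m0 m R t).bind fun p =>
        (R t (p.1 (Fin.last t))).bind fun a =>
          (Measure.pi fun n : Fin N => (m (t + 1)) (p.1 (Fin.last t) (a n))).map fun xnew =>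
            (Fin.snoc p.1 xnew, Fin.snoc p.2 a)

/-- Auxiliary backward recursion for ancestral lineages: `ancAux T a n k = B_{T-k}`
where `B_T = n` and `B_t = a_t (B_{t+1})`. -/
def ancAux {N : ℕ} (T : ℕ) (a : Fin T → Fin N → Fin N) (n : Fin N) : ℕ → Fin N
  | 0 => n
  | k + 1 => if h : T - (k + 1) < T then a ⟨T - (k + 1), h⟩ (ancAux T a n k) else n

/-- The ancestral lineage `B` of the particle with final label `n`. -/
def lineage {N T : ℕ} (a : Fin T → Fin N → Fin N) (n : Fin N) : Fin (T + 1) → Fin N :=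
  fun t => ancAux T a n (T - (t : ℕ))

/-- The trajectory `Z_T^n` of the particle with final label `n`. -/
def traj {N T : ℕ} (x : Fin (T + 1) → Fin N → 𝒳) (a : Fin T → Fin N → Fin N) (n : Fin N) :
    Fin (T + 1) → 𝒳 :=
  fun t => x t (lineage a n t)

/-- The extended target distribution `π_T^N` on particles, ancestors and the selected index. -/
noncomputable def piTN (N : ℕ) (m0 : Measure 𝒳) (m : ℕ → Kernel 𝒳 𝒳) (G : ℕ → 𝒳 → ℝ)
    (R : ℕ → (Fin N → 𝒳) → Measure (Fin N → Fin N)) (T : ℕ) :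
    Measure (((Fin (T + 1) → Fin N → 𝒳) × (Fin T → Fin N → Fin N)) × Fin N) :=
  (fkZ m0 m G T)⁻¹ •
    ((particleLaw N m0 m R T).withDensity fun p =>
        ENNReal.ofReal (∏ t : Fin T, (N : ℝ)⁻¹ * ∑ n, G t (p.1 t.castSucc n))).bind
      fun p =>
        (∑ n : Fin N, ENNReal.ofReal ((N : ℝ)⁻¹ * G T (p.1 (Fin.last T) n)) •
            Measure.dirac n).map fun n => (p, n)

/-- The conditional distribution of the whole ancestor vector given `A^n = m`. -/
noncomputable def condAncestor {N : ℕ} (R : Measure (Fin N → Fin N)) (n m : Fin N) :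
    Measure (Fin N → Fin N) :=
  (R {a | a n = m})⁻¹ • R.restrict {a | a n = m}

/-- CPF step 1: the law of the conditional particle system, where at each time `t` the
particle labelled `i t` is frozen at `z t` and the ancestor constraint `A_t^{i(t+1)} = i t`
holds. -/
noncomputable def cpfSystem (N : ℕ) (m0 : Measure 𝒳) (m : ℕ → Kernel 𝒳 𝒳)
    (R : ℕ → (Fin N → 𝒳) → Measure (Fin N → Fin N)) (z : ℕ → 𝒳) (i : ℕ → Fin N) :
    (t : ℕ) → Measure ((Fin (t + 1) → Fin N → 𝒳) × (Fin t → Fin N → Fin N))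
  | 0 => (Measure.pi fun n : Fin N => if n = i 0 then Measure.dirac (z 0) else m0).map
      fun x0 => (fun _ => x0, fun j => j.elim0)
  | t + 1 =>
      (cpfSystem N m0 m R z i t).bind fun p =>
        (condAncestor (R t (p.1 (Fin.last t))) (i (t + 1)) (i t)).bind fun a =>
          (Measure.pi fun n : Fin N =>
              if n = i (t + 1) then Measure.dirac (z (t + 1))
              else (m (t + 1)) (p.1 (Fin.last t) (a n))).map fun xnew =>
            (Fin.snoc p.1 xnew, Fin.snoc p.2 a)

def extendPath {T : ℕ} (z : Fin (T + 1) → 𝒳) : ℕ → 𝒳 :=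
  fun t => z ⟨min t T, Nat.lt_succ_of_le (Nat.min_le_right t T)⟩

def extendIdx {N T : ℕ} (i : Fin (T + 1) → Fin N) : ℕ → Fin N :=
  fun t => i ⟨min t T, Nat.lt_succ_of_le (Nat.min_le_right t T)⟩

/-- The CPF kernel with a general assignment `i` of the frozen ancestry. -/
noncomputable def cpfKernelAux (N : ℕ) (m0 : Measure 𝒳) (m : ℕ → Kernel 𝒳 𝒳)
    (G : ℕ → 𝒳 → ℝ) (R : ℕ → (Fin N → 𝒳) → Measure (Fin N → Fin N)) (T : ℕ)
    (z : ℕ → 𝒳) (i : ℕ → Fin N) : Measure (Fin (T + 1) → 𝒳) :=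
  (cpfSystem N m0 m R z i T).bind fun p =>
    (select (G T) (p.1 (Fin.last T))).bind fun n => Measure.dirac (traj p.1 p.2 n)

/-- The CPF (conditional particle filter / Particle Gibbs) Markov kernel `P_T^N`. -/
noncomputable def cpfKernel (N : ℕ) (m0 : Measure 𝒳) (m : ℕ → Kernel 𝒳 𝒳)
    (G : ℕ → 𝒳 → ℝ) (R : ℕ → (Fin N → 𝒳) → Measure (Fin N → Fin N)) (T : ℕ)
    (z : Fin (T + 1) → 𝒳) : Measure (Fin (T + 1) → 𝒳) :=
  if hN : 0 < N then cpfKernelAux N m0 m G R T (extendPath z) fun _ => (⟨0, hN⟩ : Fin N)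
  else 0

/-- Conditional probability that `A^b = v` given the other components `A^{-b} = a^{-b}`,
relative to a resampling distribution `R`. -/
noncomputable def condPMF {N : ℕ} (R : Measure (Fin N → Fin N)) (b : Fin N)
    (a : Fin N → Fin N) (v : Fin N) : ℝ≥0∞ :=
  R {Function.update a b v} / R {a' | ∀ j, j ≠ b → a' j = a j}

/-- Unnormalised backward-sampling weight of value `v` for `B_t`, given `B_{t+1} = b`. -/
noncomputable def bsWeight {N T : ℕ} (R : ℕ → (Fin N → 𝒳) → Measure (Fin N → Fin N))
    (dens : ℕ → 𝒳 → 𝒳 → ℝ) (x : Fin (T + 1) → Fin N → 𝒳) (a : Fin T → Fin N → Fin N)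
    (t : Fin T) (b v : Fin N) : ℝ≥0∞ :=
  condPMF (R t (x t.castSucc)) b (a t) v *
    ENNReal.ofReal (dens ((t : ℕ) + 1) (x t.castSucc v) (x t.succ b))

/-- One backward-sampling update, redrawing `B_t` given `B_{t+1}`. -/
noncomputable def bsStep {N T : ℕ} (R : ℕ → (Fin N → 𝒳) → Measure (Fin N → Fin N))
    (dens : ℕ → 𝒳 → 𝒳 → ℝ) (x : Fin (T + 1) → Fin N → 𝒳) (a : Fin T → Fin N → Fin N)
    (t : Fin T) (B : Fin (T + 1) → Fin N) : Measure (Fin (T + 1) → Fin N) :=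
  ∑ v : Fin N,
    (bsWeight R dens x a t (B t.succ) v /
        ∑ u : Fin N, bsWeight R dens x a t (B t.succ) u) •
      Measure.dirac (Function.update B t.castSucc v)

/-- The law of the backward-sampled lineage (step CPF-3), started from `B_T = nstar`. -/
noncomputable def bsLaw {N T : ℕ} (R : ℕ → (Fin N → 𝒳) → Measure (Fin N → Fin N))
    (dens : ℕ → 𝒳 → 𝒳 → ℝ) (x : Fin (T + 1) → Fin N → 𝒳) (a : Fin T → Fin N → Fin N)
    (nstar : Fin N) : Measure (Fin (T + 1) → Fin N) :=
  ((List.finRange T).reverse).foldl (fun μ t => μ.bind (bsStep R dens x a t))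
    (Measure.dirac fun _ => nstar)

/-- The CPF-BS kernel with general frozen-ancestry assignment `i`. -/
noncomputable def cpfBSKernelAux (N : ℕ) (m0 : Measure 𝒳) (m : ℕ → Kernel 𝒳 𝒳)
    (G : ℕ → 𝒳 → ℝ) (R : ℕ → (Fin N → 𝒳) → Measure (Fin N → Fin N))
    (dens : ℕ → 𝒳 → 𝒳 → ℝ) (T : ℕ) (z : ℕ → 𝒳) (i : ℕ → Fin N) :
    Measure (Fin (T + 1) → 𝒳) :=
  (cpfSystem N m0 m R z i T).bind fun p =>
    (select (G T) (p.1 (Fin.last T))).bind fun n =>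
      (bsLaw R dens p.1 p.2 n).bind fun B => Measure.dirac fun t => p.1 t (B t)

/-- The CPF-BS (conditional particle filter with backward sampling) kernel `P_T^{N,B}`. -/
noncomputable def cpfBSKernel (N : ℕ) (m0 : Measure 𝒳) (m : ℕ → Kernel 𝒳 𝒳)
    (G : ℕ → 𝒳 → ℝ) (R : ℕ → (Fin N → 𝒳) → Measure (Fin N → Fin N))
    (dens : ℕ → 𝒳 → 𝒳 → ℝ) (T : ℕ) (z : Fin (T + 1) → 𝒳) :
    Measure (Fin (T + 1) → 𝒳) :=
  if hN : 0 < N then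
    cpfBSKernelAux N m0 m G R dens T (extendPath z) fun _ => (⟨0, hN⟩ : Fin N)
  else 0

/-- Partial backward sampling: update at times in `J`, deterministic tracing elsewhere. -/
noncomputable def bsStepJ {N T : ℕ} (J : Finset (Fin T))
    (R : ℕ → (Fin N → 𝒳) → Measure (Fin N → Fin N)) (dens : ℕ → 𝒳 → 𝒳 → ℝ)
    (x : Fin (T + 1) → Fin N → 𝒳) (a : Fin T → Fin N → Fin N) (t : Fin T)
    (B : Fin (T + 1) → Fin N) : Measure (Fin (T + 1) → Fin N) :=
  if t ∈ J then bsStep R dens x a t B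
  else Measure.dirac (Function.update B t.castSucc (a t (B t.succ)))

noncomputable def bsLawJ {N T : ℕ} (J : Finset (Fin T))
    (R : ℕ → (Fin N → 𝒳) → Measure (Fin N → Fin N)) (dens : ℕ → 𝒳 → 𝒳 → ℝ)
    (x : Fin (T + 1) → Fin N → 𝒳) (a : Fin T → Fin N → Fin N) (nstar : Fin N) :
    Measure (Fin (T + 1) → Fin N) :=
  ((List.finRange T).reverse).foldl (fun μ t => μ.bind (bsStepJ J R dens x a t))
    (Measure.dirac fun _ => nstar)

/-- The CPF kernel regarded as a Markov kernel on the extended space of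
trajectories together with their ancestral lineage `(z_T^⋆, b_{0:T-1}^⋆, n^⋆)`. -/
noncomputable def extCPF (N : ℕ) (m0 : Measure 𝒳) (m : ℕ → Kernel 𝒳 𝒳)
    (G : ℕ → 𝒳 → ℝ) (R : ℕ → (Fin N → 𝒳) → Measure (Fin N → Fin N)) (T : ℕ)
    (s : (Fin (T + 1) → 𝒳) × (Fin (T + 1) → Fin N)) :
    Measure ((Fin (T + 1) → 𝒳) × (Fin (T + 1) → Fin N)) :=
  (cpfSystem N m0 m R (extendPath s.1) (extendIdx s.2) T).bind fun p =>
    (select (G T) (p.1 (Fin.last T))).bind fun n =>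
      Measure.dirac (traj p.1 p.2 n, lineage p.2 n)

/-- The CPF-BS(J) kernel (partial backward sampling) on the extended space. -/
noncomputable def extBSJ (N : ℕ) (m0 : Measure 𝒳) (m : ℕ → Kernel 𝒳 𝒳)
    (G : ℕ → 𝒳 → ℝ) (R : ℕ → (Fin N → 𝒳) → Measure (Fin N → Fin N))
    (dens : ℕ → 𝒳 → 𝒳 → ℝ) (T : ℕ) (J : Finset (Fin T))
    (s : (Fin (T + 1) → 𝒳) × (Fin (T + 1) → Fin N)) :
    Measure ((Fin (T + 1) → 𝒳) × (Fin (T + 1) → Fin N)) :=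
  (cpfSystem N m0 m R (extendPath s.1) (extendIdx s.2) T).bind fun p =>
    (select (G T) (p.1 (Fin.last T))).bind fun n =>
      (bsLawJ J R dens p.1 p.2 n).bind fun B =>
        Measure.dirac ((fun t => p.1 t (B t)), B)

/-- The CPF-BS kernel on the extended space. -/
noncomputable def extBS (N : ℕ) (m0 : Measure 𝒳) (m : ℕ → Kernel 𝒳 𝒳)
    (G : ℕ → 𝒳 → ℝ) (R : ℕ → (Fin N → 𝒳) → Measure (Fin N → Fin N))
    (dens : ℕ → 𝒳 → 𝒳 → ℝ) (T : ℕ)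
    (s : (Fin (T + 1) → 𝒳) × (Fin (T + 1) → Fin N)) :
    Measure ((Fin (T + 1) → 𝒳) × (Fin (T + 1) → Fin N)) :=
  extBSJ N m0 m G R dens T Finset.univ s

/-- Uniform distribution on a finite type. -/
noncomputable def uniformFin (α : Type*) [Fintype α] [MeasurableSpace α] : Measure α :=
  (Fintype.card α : ℝ≥0∞)⁻¹ • Measure.count

/-- The stationary law of `(Z_T^⋆, B_{0:T-1}^⋆, N^⋆)`, namely `Q_T ⊗ Uniform`. -/
noncomputable def extTarget (N : ℕ) (m0 : Measure 𝒳) (m : ℕ → Kernel 𝒳 𝒳)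
    (G : ℕ → 𝒳 → ℝ) (T : ℕ) :
    Measure ((Fin (T + 1) → 𝒳) × (Fin (T + 1) → Fin N)) :=
  (fkQ m0 m G T).prod (uniformFin (Fin (T + 1) → Fin N))

/-- `k`-fold iterate of a (measure-valued) Markov kernel. -/
noncomputable def iterateKernel {α : Type*} [MeasurableSpace α] (P : α → Measure α) :
    ℕ → α → Measure α
  | 0, x => Measure.dirac x
  | k + 1, x => (P x).bind (iterateKernel P k)

/-- The law of `(ξ_0, …, ξ_n)` for a Markov chain with initial law `μ` and kernel `P`. -/
noncomputable def chainLaw {α : Type*} [MeasurableSpace α] (μ : Measure α)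
    (P : α → Measure α) : (n : ℕ) → Measure (Fin (n + 1) → α)
  | 0 => μ.map fun z => fun _ => z
  | n + 1 => (chainLaw μ P n).bind fun ξ => (P (ξ (Fin.last n))).map fun z => Fin.snoc ξ z

/-- Forced-move selection probabilities (metropolised Gibbs step on `N^⋆`). -/
noncomputable def fmProb {N : ℕ} (w : Fin N → ℝ) (i0 n : Fin N) : ℝ :=
  if n = i0 then
    1 - ∑ j ∈ Finset.univ.erase i0, w j / (1 - w i0) * min ((1 - w i0) / (1 - w j)) 1
  else w n / (1 - w i0) * min ((1 - w i0) / (1 - w n)) 1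

noncomputable def fmSelect {N : ℕ} (G : 𝒳 → ℝ) (x : Fin N → 𝒳) (i0 : Fin N) :
    Measure (Fin N) :=
  ∑ n : Fin N, ENNReal.ofReal (fmProb (weight G x) i0 n) • Measure.dirac n

/-- The forced-move CPF kernel. -/
noncomputable def fmKernel (N : ℕ) (m0 : Measure 𝒳) (m : ℕ → Kernel 𝒳 𝒳)
    (G : ℕ → 𝒳 → ℝ) (R : ℕ → (Fin N → 𝒳) → Measure (Fin N → Fin N)) (T : ℕ)
    (z : Fin (T + 1) → 𝒳) : Measure (Fin (T + 1) → 𝒳) :=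
  if hN : 0 < N then
    (cpfSystem N m0 m R (extendPath z) (fun _ => (⟨0, hN⟩ : Fin N)) T).bind fun p =>
      (fmSelect (G T) (p.1 (Fin.last T)) ⟨0, hN⟩).bind fun n =>
        Measure.dirac (traj p.1 p.2 n)
  else 0

end ParticleGibbs

namespace ParticleGibbs

variable {𝒳 : Type*} [MeasurableSpace 𝒳]

/-- One step of the coupling of two conditional particle systems.  The state of each
particle is `(Z, Ž, coupled-flag)`; `xf`, `xcf` are the frozen values at the new time. -/
noncomputable def coupleStep (N : ℕ) (m : Kernel 𝒳 𝒳) (G : 𝒳 → ℝ) (xf xcf : 𝒳)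
    (s : Fin N → 𝒳 × 𝒳 × Bool) : Measure (Fin N → 𝒳 × 𝒳 × Bool) :=
  let xiC : ℝ := ∑ j, if (s j).2.2 then G (s j).1 else 0
  let xiCc : ℝ := ∑ j, if (s j).2.2 then 0 else G (s j).1
  let xiCcChk : ℝ := ∑ j, if (s j).2.2 then 0 else G (s j).2.1
  let lam : ℝ := xiC / (xiC + xiCc)
  let lamChk : ℝ := xiC / (xiC + xiCcChk)
  let mu : Measure 𝒳 :=
    ∑ j, (if (s j).2.2 then ENNReal.ofReal (G (s j).1 / xiC) else 0) • m (s j).1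
  let muC : Measure 𝒳 :=
    ∑ j, (if (s j).2.2 then 0 else ENNReal.ofReal (G (s j).1 / xiCc)) • m (s j).1
  let muCChk : Measure 𝒳 :=
    ∑ j, (if (s j).2.2 then 0 else ENNReal.ofReal (G (s j).2.1 / xiCcChk)) • m (s j).2.1
  let nu : Measure 𝒳 :=
    ENNReal.ofReal (|lam - lamChk| / (1 - min lam lamChk)) • mu +
      ENNReal.ofReal ((1 - max lam lamChk) / (1 - min lam lamChk)) • muC
  let nuChk : Measure 𝒳 :=
    ENNReal.ofReal (|lam - lamChk| / (1 - min lam lamChk)) • mu +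
      ENNReal.ofReal ((1 - max lam lamChk) / (1 - min lam lamChk)) • muCChk
  let kap : Measure (𝒳 × 𝒳) := if lam ≤ lamChk then muC.prod nuChk else nu.prod muCChk
  let pair : Measure (𝒳 × 𝒳 × Bool) :=
    ENNReal.ofReal (min lam lamChk) • mu.map (fun y => (y, y, true)) +
      (1 - ENNReal.ofReal (min lam lamChk)) • kap.map (fun q => (q.1, q.2, false))
  Measure.pi fun n : Fin N => if (n : ℕ) = 0 then Measure.dirac (xf, xcf, false) else pair

/-- The law of the coupled pair of conditional particle systems with frozen trajectories
`x` and `xc` (each relabelled as particle `0` of its system). -/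
noncomputable def coupledLaw (N : ℕ) (m0 : Measure 𝒳) (m : ℕ → Kernel 𝒳 𝒳)
    (G : ℕ → 𝒳 → ℝ) (x xc : ℕ → 𝒳) :
    (t : ℕ) → Measure (Fin (t + 1) → Fin N → 𝒳 × 𝒳 × Bool)
  | 0 => (Measure.pi fun n : Fin N =>
        if (n : ℕ) = 0 then Measure.dirac (x 0, xc 0, false)
        else m0.map fun y => (y, y, true)).map fun s0 => fun _ => s0
  | t + 1 => (coupledLaw N m0 m G x xc t).bind fun s =>
      (coupleStep N (m (t + 1)) (G t) (x (t + 1)) (xc (t + 1)) (s (Fin.last t))).map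
        fun snew => Fin.snoc s snew

/-- Number of coupled particles at time `t` of a coupled-system realisation. -/
def coupledCard {N t : ℕ} (ω : Fin (t + 1) → Fin N → 𝒳 × 𝒳 × Bool) (r : Fin (t + 1)) : ℕ :=
  (Finset.univ.filter fun n : Fin N => (ω r n).2.2 = true).card

/-! ### Residual and systematic resampling -/

/-- Integer part `⌊N W^n⌋` of the scaled weights. -/
noncomputable def floorCount (N : ℕ) (W : Fin N → ℝ) (n : Fin N) : ℕ := ⌊(N : ℝ) * W n⌋₊

/-- Residue `r^n = N W^n - ⌊N W^n⌋`. -/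
noncomputable def residue (N : ℕ) (W : Fin N → ℝ) (n : Fin N) : ℝ :=
  (N : ℝ) * W n - floorCount N W n

/-- Number of offspring of label `n` in the ancestor vector `a`. -/
def countLabel {N : ℕ} (a : Fin N → Fin N) (n : Fin N) : ℕ :=
  (Finset.univ.filter fun j => a j = n).card

/-- Number of offspring of label `n` in `a` excluding slot `b`. -/
def countLabelExcept {N : ℕ} (b : Fin N) (a : Fin N → Fin N) (n : Fin N) : ℕ :=
  ((Finset.univ.erase b).filter fun j => a j = n).card

/-- Label occupying slot `j` when stacking `c n` copies of each label `n`, sequentially. -/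
noncomputable def stackLabel (N : ℕ) (hN : 0 < N) (c : Fin N → ℕ) (j : ℕ) : Fin N :=
  if h : (Finset.univ.filter fun n : Fin N => j < ∑ i ∈ Finset.Iic n, c i).Nonempty
  then (Finset.univ.filter fun n : Fin N => j < ∑ i ∈ Finset.Iic n, c i).min' h
  else ⟨0, hN⟩

/-- Residual resampling before the random permutation: the first `∑ ⌊N W^n⌋` slots are
deterministic copies, the remaining slots are i.i.d. draws from the residual multinomial. -/
noncomputable def residualBase (N : ℕ) (W : Fin N → ℝ) : Measure (Fin N → Fin N) :=
  if hN : 0 < N then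
    Measure.pi fun j : Fin N =>
      if (j : ℕ) < ∑ n, floorCount N W n then
        Measure.dirac (stackLabel N hN (floorCount N W) (j : ℕ))
      else ∑ n : Fin N,
        ENNReal.ofReal (residue N W n / ∑ i, residue N W i) • Measure.dirac n
  else 0

/-- Residual resampling followed by a uniformly random permutation of the slots. -/
noncomputable def residualLaw (N : ℕ) (W : Fin N → ℝ) : Measure (Fin N → Fin N) :=
  (Fintype.card (Equiv.Perm (Fin N)) : ℝ≥0∞)⁻¹ •
    ∑ σ : Equiv.Perm (Fin N), (residualBase N W).map fun v => v ∘ σ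

/-- The label produced by systematic resampling for cursor position `u + n`:
the unique `m` with `S(m-1) ≤ u + n < S(m)`. -/
noncomputable def sysLabel (N : ℕ) (hN : 0 < N) (W : Fin N → ℝ) (u : ℝ) (n : Fin N) :
    Fin N :=
  if h : (Finset.univ.filter fun m : Fin N =>
      u + (n : ℝ) < (N : ℝ) * ∑ j ∈ Finset.Iic m, W j).Nonempty
  then (Finset.univ.filter fun m : Fin N =>
      u + (n : ℝ) < (N : ℝ) * ∑ j ∈ Finset.Iic m, W j).min' h
  else ⟨0, hN⟩

/-- Systematic resampling with cycle randomisation: `U ~ Uniform[0,1)`, a uniformly random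
`N`-cycle `c(n) = n + k`, and `A^n = Ā^{c(n)} = sysLabel U (n + k)`. -/
noncomputable def systematicLaw (N : ℕ) (W : Fin N → ℝ) : Measure (Fin N → Fin N) :=
  if hN : 0 < N then
    (N : ℝ≥0∞)⁻¹ • ∑ k : Fin N,
      ((volume : Measure ℝ).restrict (Set.Ico (0 : ℝ) 1)).map
        fun u => fun n : Fin N => sysLabel N hN W u (n + k)
  else 0

end ParticleGibbs



namespace ParticleGibbs

open ProbabilityTheory

section AuxGiry

variable {α β γ : Type*} [MeasurableSpace α] [MeasurableSpace β] [MeasurableSpace γ]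

lemma measure_bind_map (μ : Measure α) {g : α → β} (hg : Measurable g)
    {f : β → Measure γ} (hf : Measurable f) :
    (μ.map g).bind f = μ.bind (fun a => f (g a)) := by
  rw [Measure.bind, Measure.bind, Measure.map_map hf hg]; rfl

lemma measure_map_bind (μ : Measure α) {f : α → Measure β} (hf : Measurable f)
    {g : β → γ} (hg : Measurable g) :
    (μ.bind f).map g = μ.bind (fun a => (f a).map g) := by
  rw [Measure.bind, Measure.bind, ← Measure.join_map_map hg,
    Measure.map_map (Measure.measurable_map _ hg) hf]; rfl

lemma bind_eq_sum {α : Type*} [Fintype α] [MeasurableSpace α] [MeasurableSingletonClass α]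
    (μ : Measure α) (f : α → Measure β) :
    μ.bind f = ∑ a, μ {a} • f a := by
  ext s hs
  rw [Measure.bind_apply hs Measurable.of_discrete.aemeasurable, lintegral_fintype]
  simp only [Measure.finset_sum_apply, Measure.smul_apply, smul_eq_mul]
  exact Finset.sum_congr rfl fun a _ => mul_comm _ _

lemma measurable_smul_measure {c : α → ℝ≥0∞} {μ : α → Measure β}
    (hc : Measurable c) (hμ : Measurable μ) : Measurable fun a => c a • μ a :=
  Measure.measurable_of_measurable_coe _ fun s hs => by
    simp_rw [Measure.smul_apply, smul_eq_mul]
    exact hc.mul ((Measure.measurable_coe hs).comp hμ)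

lemma measurable_sum_measure {ι : Type*} [Fintype ι] {μ : ι → α → Measure β}
    (hμ : ∀ i, Measurable (μ i)) : Measurable fun a => ∑ i, μ i a :=
  Measure.measurable_of_measurable_coe _ fun s hs => by
    simp_rw [Measure.finset_sum_apply]
    exact Finset.measurable_sum _ fun i _ => (Measure.measurable_coe hs).comp (hμ i)

lemma pi_map_comp {N : ℕ} (σ : Equiv.Perm (Fin N)) (μ : Fin N → Measure β)
    [∀ n, IsProbabilityMeasure (μ n)] :
    (Measure.pi μ).map (fun x n => x (σ n)) = Measure.pi (fun n => μ (σ n)) := by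
  refine (Measure.pi_eq fun s hs => ?_).symm
  rw [Measure.map_apply (by measurability) (MeasurableSet.univ_pi hs)]
  have h : (fun (x : Fin N → β) n => x (σ n)) ⁻¹' (Set.univ.pi s) =
      Set.univ.pi (fun m => s (σ.symm m)) := by
    ext x
    simp only [Set.mem_preimage, Set.mem_univ_pi]
    constructor
    · intro h m; simpa using h (σ.symm m)
    · intro h n; simpa using h (σ n)
  rw [h, Measure.pi_pi]
  rw [← Equiv.prod_comp σ (fun m => μ m (s (σ.symm m)))]
  simp

lemma measurable_measure_pi {ι : Type*} [Fintype ι] (κ : ι → α → Measure β)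
    (hκ : ∀ i, Measurable (κ i)) (hp : ∀ i a, IsProbabilityMeasure (κ i a)) :
    Measurable fun a => Measure.pi fun i => κ i a := by
  apply Measure.measurable_of_measurable_coe
  have hgen : (MeasurableSpace.pi : MeasurableSpace (ι → β)) = MeasurableSpace.generateFrom
      (Set.pi Set.univ '' Set.pi Set.univ fun _ => { s : Set β | MeasurableSet s }) :=
    generateFrom_pi.symm
  have hbasic : ∀ t ∈ (Set.pi Set.univ ''
        Set.pi Set.univ fun _ : ι => { s : Set β | MeasurableSet s }),
      Measurable fun a => Measure.pi (fun i => κ i a) t := by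
    rintro _ ⟨t, ht, rfl⟩
    simp only [Measure.pi_pi]
    exact Finset.measurable_prod _ fun i _ =>
      (Measure.measurable_coe (ht i (Set.mem_univ i))).comp (hκ i)
  have hcompl : ∀ t, MeasurableSet t → (Measurable fun a => Measure.pi (fun i => κ i a) t) →
      Measurable fun a => Measure.pi (fun i => κ i a) tᶜ := by
    intro t htm ih
    have h1 : ∀ a, Measure.pi (fun i => κ i a) tᶜ = 1 - Measure.pi (fun i => κ i a) t := by
      intro a
      have : IsProbabilityMeasure (Measure.pi fun i => κ i a) := by infer_instance
      rw [measure_compl htm (measure_ne_top _ _), measure_univ]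
    simp_rw [h1]
    exact Measurable.const_sub ih 1
  have hunion : ∀ f : ℕ → Set (ι → β), Pairwise (Function.onFun Disjoint f) → (∀ n, MeasurableSet (f n)) →
      (∀ n, Measurable fun a => Measure.pi (fun i => κ i a) (f n)) →
      Measurable fun a => Measure.pi (fun i => κ i a) (⋃ n, f n) := by
    intro f hdis hfm ih
    have h1 : ∀ a, Measure.pi (fun i => κ i a) (⋃ n, f n)
        = ∑' n, Measure.pi (fun i => κ i a) (f n) := fun a => measure_iUnion hdis hfm
    simp_rw [h1]
    exact Measurable.ennreal_tsum ih
  intro s hs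
  exact MeasurableSpace.induction_on_inter
    (C := fun t _ => Measurable fun a => Measure.pi (fun i => κ i a) t)
    hgen isPiSystem_pi (by simp) hbasic hcompl hunion s hs

lemma measurable_map_family (κ : α → Measure β) (hκ : Measurable κ)
    (hp : ∀ a, IsProbabilityMeasure (κ a)) {g : α → β → γ}
    (hg : Measurable (Function.uncurry g)) :
    Measurable fun a => (κ a).map (g a) := by
  let K : Kernel α β := ⟨κ, hκ⟩
  have : IsMarkovKernel K := ⟨hp⟩
  apply Measure.measurable_of_measurable_coe
  intro s hs
  have h1 : ∀ a, (κ a).map (g a) s = κ a (Prod.mk a ⁻¹' (Function.uncurry g ⁻¹' s)) := by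
    intro a
    have hga : Measurable (g a) := hg.comp measurable_prodMk_left
    rw [Measure.map_apply hga hs]
    rfl
  simp_rw [h1]
  exact Kernel.measurable_kernel_prodMk_left (κ := K) (hg hs)

lemma measurable_eval_pair {ι : Type*} [Fintype ι] [MeasurableSpace ι]
    [MeasurableSingletonClass ι] :
    Measurable fun q : (ι → α) × ι => q.1 q.2 := by
  intro s hs
  have h : (fun q : (ι → α) × ι => q.1 q.2) ⁻¹' s
      = ⋃ j, ((fun q : (ι → α) × ι => q.1 j) ⁻¹' s) ∩ (Prod.snd ⁻¹' {j}) := by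
    ext ⟨f, j⟩
    simp only [Set.mem_preimage, Set.mem_iUnion, Set.mem_inter_iff, Set.mem_singleton_iff]
    constructor
    · intro h; exact ⟨j, h, rfl⟩
    · rintro ⟨k, h, rfl⟩; exact h
  rw [h]
  exact MeasurableSet.iUnion fun j =>
    (((measurable_pi_apply j).comp measurable_fst) hs).inter (measurable_snd (by simp))

lemma measurable_snoc_pair {k : ℕ} :
    Measurable fun q : (Fin k → α) × α => (Fin.snoc q.1 q.2 : Fin (k + 1) → α) := by
  refine measurable_pi_lambda _ fun s => ?_
  refine Fin.lastCases (motive := fun s => Measurable fun q : (Fin k → α) × α =>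
    (Fin.snoc q.1 q.2 : Fin (k + 1) → α) s) ?_ ?_ s
  · simpa only [Fin.snoc_last] using measurable_snd
  · intro r
    simp only [Fin.snoc_castSucc]
    exact (measurable_pi_apply r).comp measurable_fst

lemma measurable_snoc_fix {k : ℕ} (c : Fin k → α) :
    Measurable fun y : α => (Fin.snoc c y : Fin (k + 1) → α) :=
  measurable_snoc_pair.comp (measurable_const.prodMk measurable_id)

end AuxGiry

section AuxShift

variable {𝒳 : Type*} [MeasurableSpace 𝒳] {N : ℕ}

lemma weight_shift [NeZero N] (G : 𝒳 → ℝ) (x : Fin N → 𝒳) (k j : Fin N) :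
    weight G (fun n => x (n + k)) j = weight G x (j + k) := by
  unfold weight
  congr 1
  exact Fintype.sum_equiv (Equiv.addRight k) _ _ (fun n => rfl)

lemma select_singleton [NeZero N] (G : 𝒳 → ℝ) (x : Fin N → 𝒳) (n : Fin N) :
    select G x {n} = ENNReal.ofReal (weight G x n) := by
  simp only [select, Measure.finset_sum_apply, Measure.smul_apply,
    Measure.dirac_apply, smul_eq_mul]
  rw [Finset.sum_eq_single n]
  · simp
  · intro b _ hb
    simp [Set.indicator, hb]
  · simp

lemma ancAux_shift [NeZero N] (T : ℕ) (a : Fin T → Fin N → Fin N) (kv : ℕ → Fin N)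
    (n : Fin N) :
    ∀ k, k ≤ T → ancAux T (fun r m => a r (m + kv ((r : ℕ) + 1)) - kv (r : ℕ)) n k
      = ancAux T a (n + kv T) k - kv (T - k)
  | 0, _ => by simp [ancAux]
  | (k + 1), hk => by
    have h : T - (k + 1) < T := by omega
    have h2 : T - (k + 1) + 1 = T - k := by omega
    simp only [ancAux, dif_pos h]
    rw [ancAux_shift T a kv n k (by omega)]
    simp only [h2, sub_add_cancel]

lemma lineage_shift [NeZero N] {T : ℕ} (a : Fin T → Fin N → Fin N) (kv : ℕ → Fin N)
    (n : Fin N) (t : Fin (T + 1)) :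
    lineage (fun r m => a r (m + kv ((r : ℕ) + 1)) - kv (r : ℕ)) n t
      = lineage a (n + kv T) t - kv (t : ℕ) := by
  unfold lineage
  rw [ancAux_shift T a kv n (T - t) (Nat.sub_le _ _), Nat.sub_sub_self t.is_le]

lemma traj_shift [NeZero N] {T : ℕ} (x : Fin (T + 1) → Fin N → 𝒳)
    (a : Fin T → Fin N → Fin N) (kv : ℕ → Fin N) (n : Fin N) :
    traj (fun s m => x s (m + kv (s : ℕ))) (fun r m => a r (m + kv ((r : ℕ) + 1)) - kv (r : ℕ)) n
      = traj x a (n + kv T) := by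
  funext t
  simp only [traj, lineage_shift, sub_add_cancel]

lemma condAncestor_map [NeZero N] (G : 𝒳 → ℝ)
    (Rm : (Fin N → 𝒳) → Measure (Fin N → Fin N))
    (hRa : ∀ x n j, Rm x {a | a n = j} = ENNReal.ofReal (weight G x j))
    (hRb1 : ∀ x (k : Fin N), (Rm x).map (fun a => fun n => a (n + k)) = Rm x)
    (hRb2 : ∀ x (k : Fin N), (Rm x).map (fun a => fun n => a n - k) = Rm fun n => x (n + k))
    (x : Fin N → 𝒳) (b c k' k : Fin N) :
    (condAncestor (Rm x) b c).map (fun a => fun n => a (n + k') - k)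
      = condAncestor (Rm fun n => x (n + k)) (b - k') (c - k) := by
  unfold condAncestor
  have hmapf : (Rm x).map (fun a => fun n => a (n + k') - k) = Rm (fun n => x (n + k)) := by
    have hcomp : (fun (a : Fin N → Fin N) => fun n => a (n + k') - k)
        = (fun (a : Fin N → Fin N) => fun n => a n - k) ∘ (fun a => fun n => a (n + k')) := rfl
    rw [hcomp, ← Measure.map_map Measurable.of_discrete Measurable.of_discrete, hRb1, hRb2]
  have hpre : (fun (a : Fin N → Fin N) => fun n => a (n + k') - k) ⁻¹'
      {a | a (b - k') = c - k} = {a | a b = c} := by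
    ext a
    simp only [Set.mem_preimage, Set.mem_setOf_eq, sub_add_cancel, sub_left_inj]
  have hres : ((Rm x).restrict {a | a b = c}).map (fun a => fun n => a (n + k') - k)
      = (Rm (fun n => x (n + k))).restrict {a | a (b - k') = c - k} := by
    rw [← hmapf, Measure.restrict_map Measurable.of_discrete MeasurableSet.of_discrete, hpre]
  rw [Measure.map_smul, hres, hRa, hRa]
  congr 2
  rw [weight_shift, sub_add_cancel]

end AuxShift

section MainShift

variable {𝒳 : Type*} [MeasurableSpace 𝒳]

/-- The particle-relabelling map associated with shifts `kv`. -/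
def shiftMap (N : ℕ) (kv : ℕ → Fin N) (t : ℕ)
    (p : (Fin (t + 1) → Fin N → 𝒳) × (Fin t → Fin N → Fin N)) :
    (Fin (t + 1) → Fin N → 𝒳) × (Fin t → Fin N → Fin N) :=
  (fun s n => p.1 s (n + kv (s : ℕ)), fun r n => p.2 r (n + kv ((r : ℕ) + 1)) - kv (r : ℕ))

lemma measurable_shiftMap (N : ℕ) (kv : ℕ → Fin N) (t : ℕ) :
    Measurable (shiftMap (𝒳 := 𝒳) N kv t) := by
  refine Measurable.prod ?_ ?_
  · show Measurable fun p : (Fin (t + 1) → Fin N → 𝒳) × (Fin t → Fin N → Fin N) =>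
      fun s n => p.1 s (n + kv (s : ℕ))
    exact measurable_pi_lambda _ fun s => measurable_pi_lambda _ fun n =>
      (measurable_pi_apply _).comp ((measurable_pi_apply s).comp measurable_fst)
  · exact (Measurable.of_discrete
      (f := fun (a : Fin t → Fin N → Fin N) => fun r n => a r (n + kv ((r : ℕ) + 1)) - kv (r : ℕ))).comp
      measurable_snd

variable (N : ℕ) [NeZero N] (m0 : Measure 𝒳) [IsProbabilityMeasure m0]
  (m : ℕ → Kernel 𝒳 𝒳) [∀ t, IsMarkovKernel (m t)]
  (R : ℕ → (Fin N → 𝒳) → Measure (Fin N → Fin N))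

lemma measurable_cpfStep
    (hRmeas : ∀ t (s : Set (Fin N → Fin N)), MeasurableSet s → Measurable fun x => R t x s)
    (z : ℕ → 𝒳) (b c : Fin N) (t : ℕ) :
    Measurable fun p : (Fin (t + 1) → Fin N → 𝒳) × (Fin t → Fin N → Fin N) =>
      (condAncestor (R t (p.1 (Fin.last t))) b c).bind fun a =>
        (Measure.pi fun n : Fin N =>
            if n = b then Measure.dirac (z (t + 1))
            else (m (t + 1)) (p.1 (Fin.last t) (a n))).map fun xnew =>
          (Fin.snoc (α := fun _ : Fin (t + 1 + 1) => Fin N → 𝒳) p.1 xnew,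
            Fin.snoc (α := fun _ : Fin (t + 1) => Fin N → Fin N) p.2 a) := by
  have heval : Measurable fun p : (Fin (t + 1) → Fin N → 𝒳) × (Fin t → Fin N → Fin N) =>
      p.1 (Fin.last t) := (measurable_pi_apply _).comp measurable_fst
  have hsum : (fun p : (Fin (t + 1) → Fin N → 𝒳) × (Fin t → Fin N → Fin N) =>
      (condAncestor (R t (p.1 (Fin.last t))) b c).bind fun a =>
        (Measure.pi fun n : Fin N =>
            if n = b then Measure.dirac (z (t + 1))
            else (m (t + 1)) (p.1 (Fin.last t) (a n))).map fun xnew =>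
          (Fin.snoc (α := fun _ : Fin (t + 1 + 1) => Fin N → 𝒳) p.1 xnew,
            Fin.snoc (α := fun _ : Fin (t + 1) => Fin N → Fin N) p.2 a))
      = fun p => ∑ a, (condAncestor (R t (p.1 (Fin.last t))) b c) {a} •
        ((Measure.pi fun n : Fin N =>
            if n = b then Measure.dirac (z (t + 1))
            else (m (t + 1)) (p.1 (Fin.last t) (a n))).map fun xnew =>
          (Fin.snoc (α := fun _ : Fin (t + 1 + 1) => Fin N → 𝒳) p.1 xnew,
            Fin.snoc (α := fun _ : Fin (t + 1) => Fin N → Fin N) p.2 a)) := by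
    funext p
    exact bind_eq_sum _ _
  rw [hsum]
  refine measurable_sum_measure fun a => measurable_smul_measure ?_ ?_
  · have h1 : Measurable fun x : Fin N → 𝒳 => condAncestor (R t x) b c {a} := by
      have h0 : ∀ x : Fin N → 𝒳, condAncestor (R t x) b c {a}
          = (R t x {a' | a' b = c})⁻¹ * R t x ({a} ∩ {a' | a' b = c}) := by
        intro x
        rw [condAncestor, Measure.smul_apply,
          Measure.restrict_apply (MeasurableSet.of_discrete (s := {a})), smul_eq_mul]
      simp_rw [h0]
      exact ((hRmeas t _ MeasurableSet.of_discrete).inv).mul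
        (hRmeas t _ MeasurableSet.of_discrete)
    exact h1.comp heval
  · refine measurable_map_family _ ?_ ?_ ?_
    · refine measurable_measure_pi _ (fun n => ?_) (fun n p => ?_)
      · split_ifs with hn
        · exact measurable_const
        · exact (m (t + 1)).measurable.comp ((measurable_pi_apply (a n)).comp heval)
      · split_ifs with hn
        · infer_instance
        · infer_instance
    · intro p
      have hcomp : ∀ n : Fin N, IsProbabilityMeasure
          (if n = b then Measure.dirac (z (t + 1))
            else (m (t + 1)) (p.1 (Fin.last t) (a n))) := fun n => by
        split_ifs <;> infer_instance
      infer_instance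
    · have h2 : Measurable fun q :
          ((Fin (t + 1) → Fin N → 𝒳) × (Fin t → Fin N → Fin N)) × (Fin N → 𝒳) =>
          (Fin.snoc (α := fun _ : Fin (t + 1 + 1) => Fin N → 𝒳) q.1.1 q.2,
            Fin.snoc (α := fun _ : Fin (t + 1) => Fin N → Fin N) q.1.2 a) := by
        refine Measurable.prodMk ?_ ?_
        · exact measurable_snoc_pair.comp
            ((measurable_fst.comp measurable_fst).prodMk measurable_snd)
        · exact (Measurable.of_discrete
            (f := fun w : Fin t → Fin N → Fin N =>
              Fin.snoc (α := fun _ : Fin (t + 1) => Fin N → Fin N) w a)).comp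
            (measurable_snd.comp measurable_fst)
      exact h2

end MainShift




section StepShift

variable {𝒳 : Type*} [MeasurableSpace 𝒳]

/-- The inner (propagation) part of one CPF step. -/
noncomputable def innerFun (N : ℕ) (m : ℕ → Kernel 𝒳 𝒳)
    (z : ℕ → 𝒳) (b : Fin N) (t : ℕ)
    (p : (Fin (t + 1) → Fin N → 𝒳) × (Fin t → Fin N → Fin N)) (a : Fin N → Fin N) :
    Measure ((Fin (t + 2) → Fin N → 𝒳) × (Fin (t + 1) → Fin N → Fin N)) :=
  (Measure.pi fun n : Fin N =>
      if n = b then Measure.dirac (z (t + 1))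
      else (m (t + 1)) (p.1 (Fin.last t) (a n))).map fun xnew =>
    (Fin.snoc (α := fun _ : Fin (t + 2) => Fin N → 𝒳) p.1 xnew,
      Fin.snoc (α := fun _ : Fin (t + 1) => Fin N → Fin N) p.2 a)

/-- One full CPF step (ancestor resampling followed by propagation). -/
noncomputable def stepFun (N : ℕ) (m : ℕ → Kernel 𝒳 𝒳)
    (R : ℕ → (Fin N → 𝒳) → Measure (Fin N → Fin N)) (z : ℕ → 𝒳) (b c : Fin N) (t : ℕ)
    (p : (Fin (t + 1) → Fin N → 𝒳) × (Fin t → Fin N → Fin N)) :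
    Measure ((Fin (t + 2) → Fin N → 𝒳) × (Fin (t + 1) → Fin N → Fin N)) :=
  (condAncestor (R t (p.1 (Fin.last t))) b c).bind (innerFun N m z b t p)

variable (N : ℕ) [NeZero N] (m0 : Measure 𝒳) [IsProbabilityMeasure m0]
  (m : ℕ → Kernel 𝒳 𝒳) [∀ t, IsMarkovKernel (m t)]
  (R : ℕ → (Fin N → 𝒳) → Measure (Fin N → Fin N))

lemma cpfSystem_succ (z : ℕ → 𝒳) (j : ℕ → Fin N) (t : ℕ) :
    cpfSystem N m0 m R z j (t + 1)
      = (cpfSystem N m0 m R z j t).bind (stepFun N m R z (j (t + 1)) (j t) t) := rfl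

lemma measurable_stepFun
    (hRmeas : ∀ t (s : Set (Fin N → Fin N)), MeasurableSet s → Measurable fun x => R t x s)
    (z : ℕ → 𝒳) (b c : Fin N) (t : ℕ) :
    Measurable (stepFun N m R z b c t) :=
  measurable_cpfStep N m R hRmeas z b c t

lemma map_sum_measure {α β : Type*} [MeasurableSpace α] [MeasurableSpace β] {ι : Type*}
    [Fintype ι] (μ : ι → Measure α) {f : α → β} (hf : Measurable f) :
    (∑ n, μ n).map f = ∑ n, (μ n).map f := by
  ext s hs
  simp [Measure.map_apply hf hs, Measure.finset_sum_apply]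

lemma innerFun_map_shift (z : ℕ → 𝒳) (kv : ℕ → Fin N) (b : Fin N) (t : ℕ)
    (p : (Fin (t + 1) → Fin N → 𝒳) × (Fin t → Fin N → Fin N)) (a : Fin N → Fin N) :
    (innerFun N m z b t p a).map (shiftMap N kv (t + 1))
      = innerFun N m z (b - kv (t + 1)) t (shiftMap N kv t p)
          (fun n => a (n + kv (t + 1)) - kv t) := by
  haveI hprob : ∀ n : Fin N, IsProbabilityMeasure
      (if n = b then Measure.dirac (z (t + 1))
        else (m (t + 1)) (p.1 (Fin.last t) (a n))) := fun n => by
    split_ifs <;> infer_instance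
  unfold innerFun
  have hsnoc : Measurable fun xnew : Fin N → 𝒳 =>
      (Fin.snoc (α := fun _ : Fin (t + 2) => Fin N → 𝒳) p.1 xnew,
        Fin.snoc (α := fun _ : Fin (t + 1) => Fin N → Fin N) p.2 a) :=
    (measurable_snoc_fix p.1).prodMk measurable_const
  have hsnoc' : Measurable fun xnew : Fin N → 𝒳 =>
      (Fin.snoc (α := fun _ : Fin (t + 2) => Fin N → 𝒳) (shiftMap N kv t p).1 xnew,
        Fin.snoc (α := fun _ : Fin (t + 1) => Fin N → Fin N) (shiftMap N kv t p).2
          (fun n => a (n + kv (t + 1)) - kv t)) :=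
    (measurable_snoc_fix _).prodMk measurable_const
  have hrho : Measurable fun (xnew : Fin N → 𝒳) (n : Fin N) => xnew (n + kv (t + 1)) :=
    measurable_pi_lambda _ fun n => measurable_pi_apply _
  rw [Measure.map_map (measurable_shiftMap N kv (t + 1)) hsnoc]
  have hfun : (shiftMap (𝒳 := 𝒳) N kv (t + 1)) ∘ (fun xnew : Fin N → 𝒳 =>
        (Fin.snoc (α := fun _ : Fin (t + 2) => Fin N → 𝒳) p.1 xnew,
          Fin.snoc (α := fun _ : Fin (t + 1) => Fin N → Fin N) p.2 a))
      = (fun xnew : Fin N → 𝒳 =>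
          (Fin.snoc (α := fun _ : Fin (t + 2) => Fin N → 𝒳) (shiftMap N kv t p).1 xnew,
            Fin.snoc (α := fun _ : Fin (t + 1) => Fin N → Fin N) (shiftMap N kv t p).2
              (fun n => a (n + kv (t + 1)) - kv t)))
        ∘ (fun (xnew : Fin N → 𝒳) (n : Fin N) => xnew (n + kv (t + 1))) := by
    funext xnew
    refine Prod.ext ?_ ?_
    · funext s nn
      induction s using Fin.lastCases with
      | last => simp [shiftMap, Fin.snoc_last]
      | cast r => simp [shiftMap, Fin.snoc_castSucc]
    · funext r nn
      induction r using Fin.lastCases with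
      | last => simp [shiftMap, Fin.snoc_last]
      | cast r' => simp [shiftMap, Fin.snoc_castSucc]
  rw [hfun, ← Measure.map_map hsnoc' hrho]
  congr 1
  have hpi : (Measure.pi fun n : Fin N =>
        if n = b then Measure.dirac (z (t + 1))
        else (m (t + 1)) (p.1 (Fin.last t) (a n))).map
        (fun (xnew : Fin N → 𝒳) (n : Fin N) => xnew (n + kv (t + 1)))
      = Measure.pi (fun n : Fin N =>
          if n + kv (t + 1) = b then Measure.dirac (z (t + 1))
          else (m (t + 1)) (p.1 (Fin.last t) (a (n + kv (t + 1))))) := by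
    exact pi_map_comp (Equiv.addRight (kv (t + 1)))
      (fun n : Fin N => if n = b then Measure.dirac (z (t + 1))
        else (m (t + 1)) (p.1 (Fin.last t) (a n)))
  rw [hpi]
  refine congrArg Measure.pi ?_
  funext n
  by_cases h : n + kv (t + 1) = b
  · rw [if_pos h, if_pos (eq_sub_iff_add_eq.mpr h)]
  · rw [if_neg h, if_neg (fun hq => h (eq_sub_iff_add_eq.mp hq))]
    congr 1
    show p.1 (Fin.last t) (a (n + kv (t + 1)))
      = (shiftMap N kv t p).1 (Fin.last t) (a (n + kv (t + 1)) - kv t)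
    simp [shiftMap, Fin.val_last, sub_add_cancel]

lemma stepFun_map_shift (G : ℕ → 𝒳 → ℝ)
    (hRa : ∀ t (x : Fin N → 𝒳) (n j : Fin N),
      R t x {a | a n = j} = ENNReal.ofReal (weight (G t) x j))
    (hRb1 : ∀ t (x : Fin N → 𝒳) (k : Fin N),
      (R t x).map (fun a => fun n => a (n + k)) = R t x)
    (hRb2 : ∀ t (x : Fin N → 𝒳) (k : Fin N),
      (R t x).map (fun a => fun n => a n - k) = R t fun n => x (n + k))
    (z : ℕ → 𝒳) (kv : ℕ → Fin N) (b c : Fin N) (t : ℕ)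
    (p : (Fin (t + 1) → Fin N → 𝒳) × (Fin t → Fin N → Fin N)) :
    (stepFun N m R z b c t p).map (shiftMap N kv (t + 1))
      = stepFun N m R z (b - kv (t + 1)) (c - kv t) t (shiftMap N kv t p) := by
  have hx : (shiftMap N kv t p).1 (Fin.last t)
      = fun n => p.1 (Fin.last t) (n + kv t) := rfl
  have hcm := condAncestor_map (G t) (R t) (hRa t) (hRb1 t) (hRb2 t)
    (p.1 (Fin.last t)) b c (kv (t + 1)) (kv t)
  let e : (Fin N → Fin N) ≃ (Fin N → Fin N) :=
    { toFun := fun a n => a (n + kv (t + 1)) - kv t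
      invFun := fun a n => a (n - kv (t + 1)) + kv t
      left_inv := fun a => by funext n; simp [sub_add_cancel, add_sub_cancel_right]
      right_inv := fun a => by funext n; simp [sub_add_cancel, add_sub_cancel_right] }
  have hsingle : ∀ a : Fin N → Fin N,
      condAncestor (R t (p.1 (Fin.last t))) b c {a}
        = condAncestor (R t ((shiftMap N kv t p).1 (Fin.last t)))
            (b - kv (t + 1)) (c - kv t) {e a} := by
    intro a
    rw [hx, ← hcm,
      Measure.map_apply Measurable.of_discrete MeasurableSet.of_discrete]
    have hinj : ∀ a1 a2 : Fin N → Fin N,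
        (fun n => a1 (n + kv (t + 1)) - kv t) = (fun n => a2 (n + kv (t + 1)) - kv t) →
          a1 = a2 := by
      intro a1 a2 h
      funext n
      have h3 := congrFun h (n - kv (t + 1))
      simpa [sub_add_cancel, sub_left_inj] using h3
    congr 1
    ext a'
    constructor
    · intro h
      have h2 : a' = a := h
      show (fun n => a' (n + kv (t + 1)) - kv t) = e a
      rw [h2]; rfl
    · intro h
      have h2 : (fun n => a' (n + kv (t + 1)) - kv t)
          = (fun n => a (n + kv (t + 1)) - kv t) := h
      exact hinj a' a h2
  unfold stepFun
  rw [bind_eq_sum, bind_eq_sum, map_sum_measure _ (measurable_shiftMap N kv (t + 1))]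
  simp_rw [Measure.map_smul, innerFun_map_shift N m z kv b t p]
  refine Fintype.sum_equiv e _ _ fun a => ?_
  rw [hsingle a]
  rfl

lemma cpfSystem_map_shift
    (hRmeas : ∀ t (s : Set (Fin N → Fin N)), MeasurableSet s → Measurable fun x => R t x s)
    (G : ℕ → 𝒳 → ℝ)
    (hRa : ∀ t (x : Fin N → 𝒳) (n j : Fin N),
      R t x {a | a n = j} = ENNReal.ofReal (weight (G t) x j))
    (hRb1 : ∀ t (x : Fin N → 𝒳) (k : Fin N),
      (R t x).map (fun a => fun n => a (n + k)) = R t x)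
    (hRb2 : ∀ t (x : Fin N → 𝒳) (k : Fin N),
      (R t x).map (fun a => fun n => a n - k) = R t fun n => x (n + k))
    (z : ℕ → 𝒳) (i kv : ℕ → Fin N) :
    ∀ t, (cpfSystem N m0 m R z i t).map (shiftMap N kv t)
      = cpfSystem N m0 m R z (fun s => i s - kv s) t
  | 0 => by
    haveI : ∀ n : Fin N, IsProbabilityMeasure
        ((if n = i 0 then Measure.dirac (z 0) else m0)) := fun n => by
      split_ifs <;> infer_instance
    simp only [cpfSystem]
    have hmk : Measurable fun x0 : Fin N → 𝒳 =>
        ((fun _ : Fin 1 => x0, fun j : Fin 0 => j.elim0) :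
          (Fin 1 → Fin N → 𝒳) × (Fin 0 → Fin N → Fin N)) :=
      (measurable_pi_lambda _ fun _ => measurable_id).prodMk measurable_const
    rw [Measure.map_map (measurable_shiftMap N kv 0) hmk]
    have hrho : Measurable fun (x0 : Fin N → 𝒳) (n : Fin N) => x0 (n + kv 0) :=
      measurable_pi_lambda _ fun n => measurable_pi_apply _
    have hfun : (shiftMap (𝒳 := 𝒳) N kv 0) ∘ (fun x0 : Fin N → 𝒳 =>
          ((fun _ : Fin 1 => x0, fun j : Fin 0 => j.elim0) :
            (Fin 1 → Fin N → 𝒳) × (Fin 0 → Fin N → Fin N)))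
        = (fun x0 : Fin N → 𝒳 =>
            ((fun _ : Fin 1 => x0, fun j : Fin 0 => j.elim0) :
              (Fin 1 → Fin N → 𝒳) × (Fin 0 → Fin N → Fin N)))
          ∘ (fun (x0 : Fin N → 𝒳) (n : Fin N) => x0 (n + kv 0)) := by
      funext x0
      refine Prod.ext ?_ ?_
      · funext s n
        have hs : (s : ℕ) = 0 := by omega
        simp [shiftMap, hs]
      · funext j
        exact j.elim0
    rw [hfun, ← Measure.map_map hmk hrho]
    have hpi : (Measure.pi fun n : Fin N =>
          if n = i 0 then Measure.dirac (z 0) else m0).map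
          (fun (x0 : Fin N → 𝒳) (n : Fin N) => x0 (n + kv 0))
        = Measure.pi fun n : Fin N =>
            if n + kv 0 = i 0 then Measure.dirac (z 0) else m0 := by
      exact pi_map_comp (Equiv.addRight (kv 0))
        (fun n : Fin N => if n = i 0 then Measure.dirac (z 0) else m0)
    rw [hpi]
    have hcomp : (fun n : Fin N => if n + kv 0 = i 0 then Measure.dirac (z 0) else m0)
        = fun n : Fin N => if n = i 0 - kv 0 then Measure.dirac (z 0) else m0 := by
      funext n
      by_cases h : n + kv 0 = i 0
      · rw [if_pos h, if_pos (eq_sub_iff_add_eq.mpr h)]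
      · rw [if_neg h, if_neg (fun hq => h (eq_sub_iff_add_eq.mp hq))]
    rw [hcomp]
  | (t + 1) => by
    have IH := cpfSystem_map_shift hRmeas G hRa hRb1 hRb2 z i kv t
    simp only [cpfSystem_succ]
    rw [measure_map_bind _ (measurable_stepFun N m R hRmeas z (i (t + 1)) (i t) t)
      (measurable_shiftMap N kv (t + 1)), ← IH,
      measure_bind_map _ (measurable_shiftMap N kv t)
        (measurable_stepFun N m R hRmeas z (i (t + 1) - kv (t + 1)) (i t - kv t) t)]
    congr 1
    funext p
    exact stepFun_map_shift N m R G hRa hRb1 hRb2 z kv (i (t + 1)) (i t) t p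

/-- The selection-and-output part of the CPF kernel. -/
noncomputable def selFun (N : ℕ) (G : 𝒳 → ℝ) (T : ℕ)
    (p : (Fin (T + 1) → Fin N → 𝒳) × (Fin T → Fin N → Fin N)) :
    Measure (Fin (T + 1) → 𝒳) :=
  (select G (p.1 (Fin.last T))).bind fun n => Measure.dirac (traj p.1 p.2 n)

lemma cpfKernelAux_eq (G : ℕ → 𝒳 → ℝ) (T : ℕ) (z : ℕ → 𝒳) (j : ℕ → Fin N) :
    cpfKernelAux N m0 m G R T z j
      = (cpfSystem N m0 m R z j T).bind (selFun N (G T) T) := rfl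

lemma selFun_eq_sum (G : 𝒳 → ℝ) (T : ℕ)
    (p : (Fin (T + 1) → Fin N → 𝒳) × (Fin T → Fin N → Fin N)) :
    selFun N G T p = ∑ n, ENNReal.ofReal (weight G (p.1 (Fin.last T)) n) •
      Measure.dirac (traj p.1 p.2 n) := by
  unfold selFun
  rw [bind_eq_sum]
  exact Finset.sum_congr rfl fun n _ => by rw [select_singleton]

lemma measurable_selFun (G : 𝒳 → ℝ) (hG : Measurable G) (T : ℕ) :
    Measurable (selFun N G T) := by
  have heval : Measurable fun p : (Fin (T + 1) → Fin N → 𝒳) × (Fin T → Fin N → Fin N) =>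
      p.1 (Fin.last T) := (measurable_pi_apply _).comp measurable_fst
  have h : selFun N G T = fun p => ∑ n, ENNReal.ofReal (weight G (p.1 (Fin.last T)) n) •
      Measure.dirac (traj p.1 p.2 n) := funext (selFun_eq_sum N G T)
  rw [h]
  refine measurable_sum_measure fun n => measurable_smul_measure ?_ ?_
  · simp only [weight]
    refine ENNReal.measurable_ofReal.comp (Measurable.div ?_ ?_)
    · exact (hG.comp (measurable_pi_apply n)).comp heval
    · exact (Finset.measurable_sum Finset.univ fun j _ =>
        hG.comp (measurable_pi_apply j)).comp heval
  · refine Measure.measurable_dirac.comp ?_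
    show Measurable fun p : (Fin (T + 1) → Fin N → 𝒳) × (Fin T → Fin N → Fin N) =>
      fun t : Fin (T + 1) => p.1 t (lineage p.2 n t)
    refine measurable_pi_lambda _ fun t => ?_
    exact Measurable.comp (g := fun q : (Fin N → 𝒳) × Fin N => q.1 q.2)
      (f := fun p : (Fin (T + 1) → Fin N → 𝒳) × (Fin T → Fin N → Fin N) =>
        (p.1 t, lineage p.2 n t))
      measurable_eval_pair
      (((measurable_pi_apply t).comp measurable_fst).prodMk
        ((Measurable.of_discrete
          (f := fun a : Fin T → Fin N → Fin N => lineage a n t)).comp measurable_snd))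

lemma selFun_shift (G : 𝒳 → ℝ) (T : ℕ) (kv : ℕ → Fin N)
    (p : (Fin (T + 1) → Fin N → 𝒳) × (Fin T → Fin N → Fin N)) :
    selFun N G T (shiftMap N kv T p) = selFun N G T p := by
  rw [selFun_eq_sum, selFun_eq_sum]
  refine Fintype.sum_equiv (Equiv.addRight (kv T)) _ _ fun n => ?_
  simp only [shiftMap, Equiv.coe_addRight, Fin.val_last]
  rw [weight_shift, traj_shift]

end StepShift

end ParticleGibbs

namespace ParticleGibbs

variable {𝒳 : Type*} [MetricSpace 𝒳] [CompleteSpace 𝒳] [TopologicalSpace.SeparableSpace 𝒳]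
  [MeasurableSpace 𝒳] [BorelSpace 𝒳]

/-- Under Assumption (R), the image of a trajectory under the CPF kernel is unchanged by
the choice of the ancestry realisation `(b_{0:T-1}^⋆, n^⋆) = (i_0, …, i_T)` assigned to
the frozen trajectory: any assignment yields the same output law as `(1, …, 1)`. -/
theorem cpf_kernel_independent_of_frozen_ancestry
    (T : ℕ) (hT : 1 ≤ T) (N : ℕ) (hN : 2 ≤ N)
    (m0 : Measure 𝒳) (hm0 : IsProbabilityMeasure m0)
    (m : ℕ → Kernel 𝒳 𝒳) (hm : ∀ t, IsMarkovKernel (m t))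
    (G : ℕ → 𝒳 → ℝ) (hGmeas : ∀ t, Measurable (G t))
    (hGpos : ∀ t x, 0 < G t x) (hGbdd : ∀ t, ∃ g : ℝ, ∀ x, G t x ≤ g)
    (R : ℕ → (Fin N → 𝒳) → Measure (Fin N → Fin N))
    (hRprob : ∀ t x, IsProbabilityMeasure (R t x))
    (hRmeas : ∀ t (s : Set (Fin N → Fin N)), MeasurableSet s → Measurable fun x => R t x s)
    (hRa : ∀ t (x : Fin N → 𝒳) (n j : Fin N),
      R t x {a | a n = j} = ENNReal.ofReal (weight (G t) x j))
    (hRb1 : ∀ t (x : Fin N → 𝒳) (k : Fin N),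
      (R t x).map (fun a => fun n => a (n + k)) = R t x)
    (hRb2 : ∀ t (x : Fin N → 𝒳) (k : Fin N),
      (R t x).map (fun a => fun n => a n - k) = R t fun n => x (n + k)) :
    ∀ (z : Fin (T + 1) → 𝒳) (i : Fin (T + 1) → Fin N),
      cpfKernelAux N m0 m G R T (extendPath z) (extendIdx i) =
        cpfKernelAux N m0 m G R T (extendPath z) fun _ => (⟨0, by omega⟩ : Fin N) := by
  haveI : NeZero N := ⟨by omega⟩
  haveI := hm0
  haveI : ∀ t, IsMarkovKernel (m t) := hm
  intro z i
  have key := cpfSystem_map_shift N m0 m R hRmeas G hRa hRb1 hRb2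
    (extendPath z) (extendIdx i) (extendIdx i) T
  have h0 : (fun s => extendIdx i s - extendIdx i s) = fun _ : ℕ => (⟨0, by omega⟩ : Fin N) := by
    funext s
    rw [sub_self]
    ext
    simp
  rw [h0] at key
  rw [cpfKernelAux_eq, cpfKernelAux_eq, ← key,
    measure_bind_map _ (measurable_shiftMap N (extendIdx i) T)
      (measurable_selFun N (G T) (hGmeas T) T)]
  congr 1
  funext p
  exact (selFun_shift N (G T) T (extendIdx i) p).symm

end ParticleGibbs
end

section
/- Let W^1, …, W^N be strictly positive weights with ∑_{n=1}^N W^n = 1, and set r^n = NW^n − ⌊NW^n⌋ and R = ∑_{n=1}^N r^n, with R > 0. Consider residual resampling followed by a uniformly random permutation: stack ⌊NW^n⌋ deterministic copies of each label n (sequentially in n), append R i.i.d. draws from the multinomial distribution with probabilities r^{1:N}/R, then apply a uniformly random permutation of the N slots; call the result A^{1:N}. Then: (a) the probability mass function of A^{1:N} is P(A^{1:N} = a^{1:N}) = (R!/N!) ∏_{n=1}^N (r^n/R)^{χ^n(a) − ⌊NW^n⌋} · χ^n(a)! / (χ^n(a) − ⌊NW^n⌋)! whenever χ^n(a) ≥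 ⌊NW^n⌋ for all n (with the convention 0⁰ = 1), and 0 otherwise, where χ^n(a) = #{m : a^m = n}; and (b) this resampling distribution satisfies Assumption (R): it is marginally unbiased (P(A^m = n) = W^n for all m, n) and cycle-invariant. -/
open MeasureTheory ProbabilityTheory Filter
open scoped ENNReal Topology

namespace ParticleGibbs

variable {𝒳 : Type*} [MetricSpace 𝒳] [CompleteSpace 𝒳] [TopologicalSpace.SeparableSpace 𝒳]
  [MeasurableSpace 𝒳] [BorelSpace 𝒳]


section ResidualAux

open Finset Equiv
set_option linter.unusedSectionVars false
set_option maxHeartbeats 1000000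

namespace PGaux

variable {γ β : Type*} [Fintype γ] [DecidableEq γ] [Fintype β] [DecidableEq β]

/-- number of permutations fixing a function -/
lemma card_fix (f : γ → β) :
    (univ.filter fun σ : Perm γ => f ∘ σ = f).card
      = ∏ b, Nat.factorial ((univ.filter fun x => f x = b).card) := by
  have := DomMulAct.stabilizer_card f
  rw [Fintype.card_subtype] at this
  rw [this]
  exact Finset.prod_congr rfl fun b _ => by rw [Fintype.card_subtype]

/-- coset version -/
lemma card_comp_eq (f g : γ → β) (σ0 : Perm γ) (h : g = f ∘ σ0) :
    (univ.filter fun σ : Perm γ => f ∘ σ = g).card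
      = ∏ b, Nat.factorial ((univ.filter fun x => g x = b).card) := by
  rw [← card_fix g]
  apply Finset.card_bij' (fun σ _ => σ0⁻¹ * σ) (fun τ _ => σ0 * τ)
  · intro σ hσ
    simp only [mem_filter, mem_univ, true_and] at hσ ⊢
    funext x
    calc (g ∘ ⇑(σ0⁻¹ * σ)) x = g (σ0⁻¹ (σ x)) := rfl
      _ = f (σ0 (σ0⁻¹ (σ x))) := congrFun h _
      _ = f (σ x) := by rw [Equiv.Perm.coe_inv, Equiv.apply_symm_apply]
      _ = g x := congrFun hσ x
  · intro τ hτ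
    simp only [mem_filter, mem_univ, true_and] at hτ ⊢
    funext x
    calc (f ∘ ⇑(σ0 * τ)) x = f (σ0 (τ x)) := rfl
      _ = g (τ x) := (congrFun h _).symm
      _ = g x := congrFun hτ x
  · intro σ _; group
  · intro τ _; group

lemma counts_comp (f : γ → β) (σ : Perm γ) (b : β) :
    (univ.filter fun x => f (σ x) = b).card = (univ.filter fun x => f x = b).card := by
  apply Finset.card_bij (fun x _ => σ x)
  · intro x hx; simp only [mem_filter, mem_univ, true_and] at hx ⊢; exact hx
  · intro x _ y _ h; exact σ.injective h
  · intro y hy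
    simp only [mem_filter, mem_univ, true_and] at hy
    exact ⟨σ⁻¹ y, by simp [hy], by simp⟩

lemma exists_comp_of_counts {f g : γ → β}
    (h : ∀ b, (univ.filter fun x => g x = b).card = (univ.filter fun x => f x = b).card) :
    ∃ σ : Perm γ, g = f ∘ σ := by
  have hc : ∀ b, Fintype.card {x // g x = b} = Fintype.card {x // f x = b} := by
    intro b; rw [Fintype.card_subtype, Fintype.card_subtype]; exact h b
  let e : ∀ b, {x // g x = b} ≃ {x // f x = b} := fun b => Fintype.equivOfCardEq (hc b)
  refine ⟨(Equiv.sigmaFiberEquiv g).symm.trans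
    ((Equiv.sigmaCongrRight e).trans (Equiv.sigmaFiberEquiv f)), ?_⟩
  funext x
  exact ((e (g x) ⟨x, rfl⟩).prop).symm

lemma image_comp_eq (f : γ → β) :
    (univ : Finset (Perm γ)).image (fun σ : Perm γ => f ∘ ⇑σ)
      = univ.filter (fun g : γ → β => ∀ b,
          (univ.filter fun x => g x = b).card = (univ.filter fun x => f x = b).card) := by
  ext g
  simp only [mem_image, mem_univ, true_and, mem_filter]
  constructor
  · rintro ⟨σ, rfl⟩ b
    exact counts_comp f σ b
  · intro h
    obtain ⟨σ, rfl⟩ := exists_comp_of_counts h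
    exact ⟨σ, rfl⟩

/-- orbit-stabilizer count for functions with prescribed fiber sizes -/
lemma card_counts (k : β → ℕ) (g0 : γ → β)
    (hg0 : ∀ b, (univ.filter fun x => g0 x = b).card = k b) :
    (univ.filter (fun g : γ → β => ∀ b,
        (univ.filter fun x => g x = b).card = k b)).card * ∏ b, Nat.factorial (k b)
      = Nat.factorial (Fintype.card γ) := by
  have h1 : ((univ : Finset (Perm γ))).card = Nat.factorial (Fintype.card γ) := by
    rw [Finset.card_univ, Fintype.card_perm]
  rw [← h1, Finset.card_eq_sum_card_image (fun σ : Perm γ => g0 ∘ ⇑σ) univ]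
  have hset : (univ : Finset (Perm γ)).image (fun σ : Perm γ => g0 ∘ ⇑σ)
      = univ.filter (fun g : γ → β => ∀ b, (univ.filter fun x => g x = b).card = k b) := by
    rw [image_comp_eq g0]
    ext g
    simp only [mem_filter, mem_univ, true_and]
    exact forall_congr' fun b => by rw [hg0 b]
  have hterm : ∀ g ∈ (univ.filter (fun g : γ → β => ∀ b,
        (univ.filter fun x => g x = b).card = k b)),
      (univ.filter fun σ : Perm γ => g0 ∘ ⇑σ = g).card = ∏ b, Nat.factorial (k b) := by
    intro g hg
    rw [mem_filter] at hg
    obtain ⟨σ0, rfl⟩ := exists_comp_of_counts (f := g0) (g := g)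
      (fun b => by rw [hg.2 b, hg0 b])
    rw [card_comp_eq g0 _ σ0 rfl]
    exact Finset.prod_congr rfl fun b _ => by rw [hg.2 b]
  rw [hset, Finset.sum_congr rfl hterm, Finset.sum_const, smul_eq_mul, mul_comm]

end PGaux

variable {N : ℕ} (hN : 0 < N)

lemma stackLabel_eq_iff (c : Fin N → ℕ) {j : ℕ} (hj : j < ∑ i, c i) (n : Fin N) :
    stackLabel N hN c j = n ↔
      (∑ i ∈ Finset.Iio n, c i ≤ j ∧ j < ∑ i ∈ Finset.Iic n, c i) := by
  set T := Finset.univ.filter fun m : Fin N => j < ∑ i ∈ Finset.Iic m, c i with hT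
  have htopIic : Finset.Iic (⟨N - 1, Nat.sub_lt hN one_pos⟩ : Fin N) = Finset.univ := by
    ext i
    simp only [Finset.mem_Iic, Finset.mem_univ, iff_true, Fin.le_def]
    exact Nat.le_sub_one_of_lt i.isLt
  have htop : (⟨N - 1, Nat.sub_lt hN one_pos⟩ : Fin N) ∈ T := by
    rw [hT, Finset.mem_filter, htopIic]
    exact ⟨Finset.mem_univ _, hj⟩
  have hne : T.Nonempty := ⟨_, htop⟩
  have hsl : stackLabel N hN c j = T.min' hne := by
    rw [stackLabel, dif_pos hne]
  rw [hsl]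
  constructor
  · intro hmin
    have hmem : n ∈ T := hmin ▸ T.min'_mem hne
    rw [hT, Finset.mem_filter] at hmem
    refine ⟨?_, hmem.2⟩
    by_contra hlt
    push_neg at hlt
    -- j < ∑ i ∈ Iio n, c i ; find m < n in T
    have hn0 : 0 < (n : ℕ) := by
      rcases Nat.eq_zero_or_pos (n : ℕ) with h0 | h
      · exfalso
        have : Finset.Iio n = ∅ := by
          ext i; simp only [Finset.mem_Iio, Finset.notMem_empty, iff_false, Fin.lt_def, h0]
          omega
        rw [this] at hlt; simp at hlt
      · exact h
    set m : Fin N := ⟨(n : ℕ) - 1, lt_trans (Nat.sub_lt hn0 one_pos) n.isLt⟩ with hm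
    have hIic : Finset.Iic m = Finset.Iio n := by
      ext i
      simp only [Finset.mem_Iic, Finset.mem_Iio, Fin.le_def, Fin.lt_def, hm]
      omega
    have hmT : m ∈ T := by
      rw [hT, Finset.mem_filter, hIic]
      exact ⟨Finset.mem_univ _, hlt⟩
    have hle : n ≤ m := hmin.symm.le.trans (T.min'_le m hmT)
    have hmn : m < n := by rw [Fin.lt_def, hm]; exact Nat.sub_lt hn0 one_pos
    exact absurd (lt_of_le_of_lt hle hmn) (lt_irrefl n)
  · rintro ⟨hlo, hhi⟩
    have hmem : n ∈ T := by rw [hT, Finset.mem_filter]; exact ⟨Finset.mem_univ _, hhi⟩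
    refine le_antisymm (T.min'_le n hmem) ?_
    by_contra hlt
    push_neg at hlt
    have hmT : j < ∑ i ∈ Finset.Iic (T.min' hne), c i :=
      (Finset.mem_filter.mp (T.min'_mem hne)).2
    have hsub : Finset.Iic (T.min' hne) ⊆ Finset.Iio n := by
      intro i hi
      rw [Finset.mem_Iic] at hi
      rw [Finset.mem_Iio]
      exact lt_of_le_of_lt hi hlt
    have hle2 : ∑ i ∈ Finset.Iic (T.min' hne), c i ≤ ∑ i ∈ Finset.Iio n, c i :=
      Finset.sum_le_sum_of_subset hsub
    omega

lemma stack_fiber (c : Fin N → ℕ) (n : Fin N) :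
    ((Finset.range (∑ i, c i)).filter fun j => stackLabel N hN c j = n).card = c n := by
  have hIic : Finset.Iic n = insert n (Finset.Iio n) := by
    ext i
    simp only [Finset.mem_Iic, Finset.mem_insert, Finset.mem_Iio]
    exact ⟨fun h => h.lt_or_eq.elim (fun h => Or.inr h) fun h => Or.inl h, by
      rintro (rfl | h); exact le_refl _; exact le_of_lt h⟩
  have hsum : ∑ i ∈ Finset.Iic n, c i = c n + ∑ i ∈ Finset.Iio n, c i := by
    rw [hIic, Finset.sum_insert (by simp)]
  have : ((Finset.range (∑ i, c i)).filter fun j => stackLabel N hN c j = n)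
      = Finset.Ico (∑ i ∈ Finset.Iio n, c i) (∑ i ∈ Finset.Iic n, c i) := by
    ext j
    simp only [Finset.mem_filter, Finset.mem_range, Finset.mem_Ico]
    constructor
    · rintro ⟨hj, hsl⟩
      exact (stackLabel_eq_iff hN c hj n).mp hsl
    · rintro ⟨hlo, hhi⟩
      have hj : j < ∑ i, c i :=
        lt_of_lt_of_le hhi (Finset.sum_le_sum_of_subset (Finset.subset_univ _))
      exact ⟨hj, (stackLabel_eq_iff hN c hj n).mpr ⟨hlo, hhi⟩⟩
  rw [this, Nat.card_Ico, hsum]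
  omega


-- ext lemma
lemma measure_ext_sing {α : Type*} [MeasurableSpace α] [MeasurableSingletonClass α]
    [Countable α] {μ ν : Measure α} (h : ∀ a, μ {a} = ν {a}) : μ = ν := by
  have key : ∀ (μ' : Measure α) (s : Set α), μ' s = ∑' x : s, μ' {(x : α)} := by
    intro μ' s
    conv_lhs => rw [← Set.biUnion_of_singleton s]
    exact measure_biUnion (Set.to_countable s)
      (fun a _ b _ hab => Set.disjoint_singleton.mpr hab)
      (fun b _ => measurableSet_singleton b)
  ext s _
  rw [key μ s, key ν s]
  exact tsum_congr fun x => h x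

lemma sum_smul_dirac_singleton {N : ℕ} (w : Fin N → ℝ≥0∞) (x : Fin N) :
    (∑ n, w n • Measure.dirac n) {x} = w x := by
  rw [Measure.finset_sum_apply]
  simp only [Measure.smul_apply, Measure.dirac_apply, smul_eq_mul]
  rw [Finset.sum_eq_single x]
  · simp
  · intro n _ hn
    simp [Set.indicator, hn]
  · simp

lemma sum_smul_dirac_univ {N : ℕ} (w : Fin N → ℝ≥0∞) :
    (∑ n, w n • Measure.dirac n) Set.univ = ∑ n, w n := by
  rw [Measure.finset_sum_apply]
  simp [Measure.smul_apply]

section Base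

variable {N : ℕ} (hN : 0 < N) (W : Fin N → ℝ)

lemma base_factor_finite (j : Fin N) :
    IsFiniteMeasure (if (j : ℕ) < ∑ n, floorCount N W n then
        Measure.dirac (stackLabel N hN (floorCount N W) (j : ℕ))
      else ∑ n : Fin N,
        ENNReal.ofReal (residue N W n / ∑ i, residue N W i) • Measure.dirac n) := by
  split
  · infer_instance
  · constructor
    rw [sum_smul_dirac_univ]
    exact ENNReal.sum_lt_top.mpr fun n _ => ENNReal.ofReal_lt_top

lemma residualBase_singleton (b : Fin N → Fin N) :
    residualBase N W {b} =
      if ∀ j : Fin N, (j : ℕ) < ∑ n, floorCount N W n →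
          b j = stackLabel N hN (floorCount N W) (j : ℕ) then
        ∏ j ∈ univ.filter (fun j : Fin N => ¬ ((j : ℕ) < ∑ n, floorCount N W n)),
          ENNReal.ofReal (residue N W (b j) / ∑ i, residue N W i)
      else 0 := by
  haveI := fun j => base_factor_finite hN W j
  rw [residualBase, dif_pos hN, ← Set.univ_pi_singleton b, Measure.pi_pi]
  rw [← Finset.prod_filter_mul_prod_filter_not univ (fun j : Fin N => (j : ℕ) < ∑ n, floorCount N W n)]
  have htail : ∏ j ∈ univ.filter (fun j : Fin N => ¬ ((j : ℕ) < ∑ n, floorCount N W n)),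
      (if (j : ℕ) < ∑ n, floorCount N W n then
        Measure.dirac (stackLabel N hN (floorCount N W) (j : ℕ))
      else ∑ n : Fin N,
        ENNReal.ofReal (residue N W n / ∑ i, residue N W i) • Measure.dirac n) {b j}
      = ∏ j ∈ univ.filter (fun j : Fin N => ¬ ((j : ℕ) < ∑ n, floorCount N W n)),
          ENNReal.ofReal (residue N W (b j) / ∑ i, residue N W i) := by
    refine Finset.prod_congr rfl fun j hj => ?_
    rw [mem_filter] at hj
    rw [if_neg hj.2, sum_smul_dirac_singleton]
  rw [htail]
  by_cases hall : ∀ j : Fin N, (j : ℕ) < ∑ n, floorCount N W n →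
      b j = stackLabel N hN (floorCount N W) (j : ℕ)
  · rw [if_pos hall]
    have hpre : ∏ j ∈ univ.filter (fun j : Fin N => (j : ℕ) < ∑ n, floorCount N W n),
        (if (j : ℕ) < ∑ n, floorCount N W n then
          Measure.dirac (stackLabel N hN (floorCount N W) (j : ℕ))
        else ∑ n : Fin N,
          ENNReal.ofReal (residue N W n / ∑ i, residue N W i) • Measure.dirac n) {b j} = 1 := by
      refine Finset.prod_eq_one fun j hj => ?_
      rw [mem_filter] at hj
      rw [if_pos hj.2, Measure.dirac_apply]
      simp [hall j hj.2]
    rw [hpre, one_mul]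
  · rw [if_neg hall]
    push_neg at hall
    obtain ⟨j0, hj0, hne⟩ := hall
    have : ∏ j ∈ univ.filter (fun j : Fin N => (j : ℕ) < ∑ n, floorCount N W n),
        (if (j : ℕ) < ∑ n, floorCount N W n then
          Measure.dirac (stackLabel N hN (floorCount N W) (j : ℕ))
        else ∑ n : Fin N,
          ENNReal.ofReal (residue N W n / ∑ i, residue N W i) • Measure.dirac n) {b j} = 0 := by
      refine Finset.prod_eq_zero (i := j0) (by simp [hj0]) ?_
      rw [if_pos hj0, Measure.dirac_apply]
      simp [Set.indicator, Ne.symm hne]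
    rw [this, zero_mul]

lemma residualLaw_apply (s : Set (Fin N → Fin N)) (hs : MeasurableSet s) :
    residualLaw N W s =
      ((N.factorial : ℝ≥0∞))⁻¹ * ∑ σ : Perm (Fin N), residualBase N W ((fun v => v ∘ ⇑σ) ⁻¹' s) := by
  rw [residualLaw, Measure.smul_apply, Measure.finset_sum_apply, smul_eq_mul,
    Fintype.card_perm, Fintype.card_fin]
  congr 1
  exact Finset.sum_congr rfl fun σ _ => Measure.map_apply (measurable_of_countable _) hs

lemma residualLaw_singleton (a : Fin N → Fin N) :
    residualLaw N W {a} =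
      ((N.factorial : ℝ≥0∞))⁻¹ * ∑ σ : Perm (Fin N), residualBase N W {a ∘ ⇑σ} := by
  rw [residualLaw_apply (W := W) _ (measurableSet_singleton a)]
  congr 1
  rw [← Equiv.sum_comp (Equiv.inv (Perm (Fin N))) fun σ => residualBase N W {a ∘ ⇑σ}]
  refine Finset.sum_congr rfl fun σ _ => ?_
  congr 1
  ext v
  simp only [Set.mem_preimage, Set.mem_singleton_iff, Equiv.inv_apply]
  constructor
  · intro h; funext x; have := congrFun h (σ⁻¹ x); simpa using this
  · intro h; funext x; rw [h]; simp

end Base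

variable {N : ℕ} (hN : 0 < N) (W : Fin N → ℝ)

lemma card_val_lt {m : ℕ} (hm : m ≤ N) :
    ((univ : Finset (Fin N)).filter fun j : Fin N => (j : ℕ) < m).card = m := by
  have h : ((univ : Finset (Fin N)).filter fun j : Fin N => (j : ℕ) < m).card
      = (Finset.range m).card := by
    refine Finset.card_nbij (fun j => (j : ℕ)) ?_ ?_ ?_
    · intro j hj; rw [Finset.mem_coe, mem_filter] at hj; exact Finset.mem_range.mpr hj.2
    · intro j _ j' _ h; exact Fin.val_injective h
    · intro m' hm'
      simp only [Finset.coe_range, Set.mem_Iio] at hm'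
      exact ⟨⟨m', lt_of_lt_of_le hm' hm⟩, by simp [hm'], rfl⟩
  rw [h, Finset.card_range]

lemma stack_fiber_fin (c : Fin N → ℕ) (hc : ∑ n, c n ≤ N) (n : Fin N) :
    (((univ : Finset (Fin N)).filter fun j : Fin N => (j : ℕ) < ∑ i, c i).filter
        fun j : Fin N => stackLabel N hN c (j : ℕ) = n).card = c n := by
  have h : (((univ : Finset (Fin N)).filter fun j : Fin N => (j : ℕ) < ∑ i, c i).filter
        fun j : Fin N => stackLabel N hN c (j : ℕ) = n).card
      = ((Finset.range (∑ i, c i)).filter fun j => stackLabel N hN c j = n).card := by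
    refine Finset.card_nbij (fun j : Fin N => (j : ℕ)) ?_ ?_ ?_
    · intro j hj
      simp only [mem_coe, mem_filter, mem_univ, true_and, Finset.mem_range] at hj ⊢
      exact ⟨hj.1, hj.2⟩
    · intro j _ j' _ h; exact Fin.val_injective h
    · intro m hm
      simp only [mem_coe, mem_filter, Finset.mem_range, mem_univ, true_and] at hm
      refine ⟨⟨m, lt_of_lt_of_le hm.1 hc⟩, ?_, rfl⟩
      simp only [mem_coe, mem_filter, mem_univ, true_and]
      exact ⟨hm.1, hm.2⟩
  rw [h, stack_fiber hN c n]

lemma subtype_filter_card (p : Fin N → Prop) [DecidablePred p] (r : Fin N → Prop)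
    [DecidablePred r] :
    ((univ : Finset {j : Fin N // p j}).filter fun x => r x.val).card
      = (((univ : Finset (Fin N)).filter p).filter fun j => r j).card := by
  refine Finset.card_nbij (fun x => x.val) ?_ ?_ ?_
  · intro x hx
    simp only [mem_coe, mem_filter, mem_univ, true_and] at hx ⊢
    exact ⟨x.prop, hx⟩
  · intro x _ y _ h; exact Subtype.ext h
  · intro j hj
    simp only [mem_coe, mem_filter, mem_univ, true_and] at hj
    exact ⟨⟨j, hj.1⟩, by simp only [mem_coe, mem_filter, mem_univ, true_and]; exact hj.2, rfl⟩

/-- the set of ancestor vectors with the same counts as `a` and the stacked prefix -/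
noncomputable def classM (N : ℕ) (hN : 0 < N) (W : Fin N → ℝ) (a : Fin N → Fin N) :
    Finset (Fin N → Fin N) :=
  univ.filter fun b =>
    (∀ n, countLabel b n = countLabel a n) ∧
    ∀ j : Fin N, (j : ℕ) < ∑ n, floorCount N W n →
      b j = stackLabel N hN (floorCount N W) (j : ℕ)

lemma classM_fibers (a b : Fin N → Fin N) (hb : b ∈ classM N hN W a)
    (hFN : ∑ n, floorCount N W n ≤ N) (n : Fin N) :
    (((univ : Finset (Fin N)).filter fun j : Fin N =>
        ¬ ((j : ℕ) < ∑ m, floorCount N W m)).filter fun j => b j = n).card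
      = countLabel a n - floorCount N W n
    ∧ floorCount N W n ≤ countLabel a n := by
  rw [classM, mem_filter] at hb
  obtain ⟨-, hbc, hbp⟩ := hb
  have hcongr : ∀ j ∈ (univ : Finset (Fin N)).filter
      (fun j : Fin N => (j : ℕ) < ∑ m, floorCount N W m),
      (b j = n ↔ stackLabel N hN (floorCount N W) (j : ℕ) = n) := by
    intro j hj
    rw [mem_filter] at hj
    rw [hbp j hj.2]
  have h1 : (((univ : Finset (Fin N)).filter fun j : Fin N =>
      (j : ℕ) < ∑ m, floorCount N W m).filter fun j => b j = n).card = floorCount N W n := by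
    rw [Finset.filter_congr hcongr, stack_fiber_fin hN (floorCount N W) hFN n]
  have h2 := Finset.card_filter_add_card_filter_not
    (s := (univ : Finset (Fin N)).filter fun j => b j = n)
    (fun j : Fin N => (j : ℕ) < ∑ m, floorCount N W m)
  rw [Finset.filter_comm, Finset.filter_comm
    (fun j : Fin N => b j = n) (fun j : Fin N => ¬ ((j : ℕ) < ∑ m, floorCount N W m))] at h2
  have hcnt : ((univ : Finset (Fin N)).filter fun j => b j = n).card = countLabel a n := hbc n
  rw [hcnt, h1] at h2
  omega

lemma classM_card (a : Fin N → Fin N)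
    (hFN : ∑ n, floorCount N W n ≤ N)
    (hsumχ : ∑ n, countLabel a n = N)
    (hcle : ∀ n, floorCount N W n ≤ countLabel a n) :
    (classM N hN W a).card *
        ∏ n, Nat.factorial (countLabel a n - floorCount N W n)
      = Nat.factorial (N - ∑ n, floorCount N W n) := by
  classical
  have hQcard : ((univ : Finset (Fin N)).filter fun j : Fin N =>
      ¬ ((j : ℕ) < ∑ m, floorCount N W m)).card = N - ∑ m, floorCount N W m := by
    have h := Finset.card_filter_add_card_filter_not
      (s := (univ : Finset (Fin N))) (fun j : Fin N => (j : ℕ) < ∑ m, floorCount N W m)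
    rw [card_val_lt hFN, Finset.card_univ, Fintype.card_fin] at h
    omega
  have hγ : Fintype.card {j : Fin N // ¬ ((j : ℕ) < ∑ m, floorCount N W m)}
      = N - ∑ m, floorCount N W m := by
    rw [Fintype.card_subtype]; exact hQcard
  set k : Fin N → ℕ := fun n => countLabel a n - floorCount N W n with hk
  have hksum : ∑ n, k n = N - ∑ m, floorCount N W m := by
    have h1 : ∑ n, (k n + floorCount N W n) = ∑ n, countLabel a n :=
      Finset.sum_congr rfl fun n _ => Nat.sub_add_cancel (hcle n)
    rw [Finset.sum_add_distrib] at h1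
    omega
  set e := Fintype.equivFinOfCardEq hγ with he
  set g0 : {j : Fin N // ¬ ((j : ℕ) < ∑ m, floorCount N W m)} → Fin N :=
    fun x => stackLabel N hN k ((e x : Fin _) : ℕ) with hg0def
  have hg0 : ∀ n, ((univ : Finset _).filter fun x => g0 x = n).card = k n := by
    intro n
    have h : ((univ : Finset _).filter fun x => g0 x = n).card
        = ((Finset.range (∑ i, k i)).filter fun j => stackLabel N hN k j = n).card := by
      refine Finset.card_nbij (fun x => ((e x : Fin _) : ℕ)) ?_ ?_ ?_
      · intro x hx
        simp only [mem_coe, mem_filter, mem_univ, true_and, Finset.mem_range] at hx ⊢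
        exact ⟨by rw [hksum]; exact (e x).isLt, hx⟩
      · intro x _ y _ h; exact e.injective (Fin.val_injective h)
      · intro m hm
        simp only [mem_coe, mem_filter, Finset.mem_range, mem_univ, true_and] at hm
        have hm1 : m < N - ∑ m, floorCount N W m := hksum ▸ hm.1
        refine ⟨e.symm ⟨m, hm1⟩, ?_, by simp⟩
        simp only [mem_coe, mem_filter, mem_univ, true_and, hg0def, Equiv.apply_symm_apply]
        exact hm.2
    rw [h, stack_fiber hN k n]
  have hmain := PGaux.card_counts k g0 hg0
  rw [hγ] at hmain
  have hbij : (classM N hN W a).card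
      = ((univ : Finset _).filter
          fun g : {j : Fin N // ¬ ((j : ℕ) < ∑ m, floorCount N W m)} → Fin N =>
          ∀ n, ((univ : Finset _).filter fun x => g x = n).card = k n).card := by
    refine Finset.card_nbij'
      (fun b => fun x : {j : Fin N // ¬ ((j : ℕ) < ∑ m, floorCount N W m)} => b x.val)
      (fun g => fun j : Fin N =>
        if h : (j : ℕ) < ∑ m, floorCount N W m then stackLabel N hN (floorCount N W) (j : ℕ)
        else g ⟨j, h⟩) ?_ ?_ ?_ ?_
    · -- forward membership
      intro b hb
      simp only [mem_coe, mem_filter, mem_univ, true_and]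
      intro n
      rw [subtype_filter_card (p := fun j : Fin N => ¬ ((j : ℕ) < ∑ m, floorCount N W m))
        (r := fun j => b j = n)]
      exact (classM_fibers hN W a b hb hFN n).1
    · -- backward membership
      intro g hg
      simp only [mem_coe, mem_filter, mem_univ, true_and] at hg
      have hmem : (fun j : Fin N => if h : (j : ℕ) < ∑ m, floorCount N W m
            then stackLabel N hN (floorCount N W) (j : ℕ) else g ⟨j, h⟩) ∈ classM N hN W a := by
        simp only [classM, Finset.mem_filter]
        refine ⟨mem_univ _, fun n => ?_, fun j hj => by simp only [dif_pos hj]⟩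
        set b : Fin N → Fin N := fun j => if h : (j : ℕ) < ∑ m, floorCount N W m
            then stackLabel N hN (floorCount N W) (j : ℕ) else g ⟨j, h⟩ with hbdef
        show countLabel b n = countLabel a n
        have h2 := Finset.card_filter_add_card_filter_not
          (s := (univ : Finset (Fin N)).filter fun j => b j = n)
          (fun j : Fin N => (j : ℕ) < ∑ m, floorCount N W m)
        rw [Finset.filter_comm, Finset.filter_comm
          (fun j : Fin N => b j = n)
          (fun j : Fin N => ¬ ((j : ℕ) < ∑ m, floorCount N W m))] at h2
        have hcongr : ∀ j ∈ (univ : Finset (Fin N)).filter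
            (fun j : Fin N => (j : ℕ) < ∑ m, floorCount N W m),
            (b j = n ↔ stackLabel N hN (floorCount N W) (j : ℕ) = n) := by
          intro j hj
          rw [mem_filter] at hj
          rw [hbdef]
          simp only [dif_pos hj.2]
        have hpre : (((univ : Finset (Fin N)).filter fun j : Fin N =>
            (j : ℕ) < ∑ m, floorCount N W m).filter fun j => b j = n).card
            = floorCount N W n := by
          rw [Finset.filter_congr hcongr, stack_fiber_fin hN (floorCount N W) hFN n]
        have hcongr2 : ∀ x ∈ (univ : Finset {j : Fin N // ¬ ((j : ℕ) < ∑ m, floorCount N W m)}),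
            ((b x.val = n) ↔ (g x = n)) := by
          intro x _
          rw [hbdef]
          simp only [dif_neg x.prop]
        have htail : (((univ : Finset (Fin N)).filter fun j : Fin N =>
            ¬ ((j : ℕ) < ∑ m, floorCount N W m)).filter fun j => b j = n).card = k n := by
          rw [← subtype_filter_card (p := fun j : Fin N => ¬ ((j : ℕ) < ∑ m, floorCount N W m))
            (r := fun j => b j = n), Finset.filter_congr hcongr2]
          exact hg n
        rw [hpre, htail] at h2
        have h3 := hcle n
        simp only [hk] at h2
        show ((univ : Finset (Fin N)).filter fun j => b j = n).card = countLabel a n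
        exact h2.symm.trans (Nat.add_sub_cancel' h3)
      exact hmem
    · -- left inverse
      intro b hb
      funext j
      by_cases hj : (j : ℕ) < ∑ m, floorCount N W m
      · simp only [dif_pos hj]
        rw [classM, Finset.mem_coe, mem_filter] at hb
        exact (hb.2.2 j hj).symm
      · simp only [dif_neg hj]
    · -- right inverse
      intro g hg
      funext x
      simp only [dif_neg x.prop]
  rw [hbij]
  convert hmain using 2
  exact congrArg Finset.card (by congr)

lemma class_sum (a : Fin N → Fin N) (hFN : ∑ n, floorCount N W n ≤ N) :
    ∑ b ∈ (univ : Finset (Fin N → Fin N)).filter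
        (fun b => ∀ n, countLabel b n = countLabel a n),
      residualBase N W {b}
    = (classM N hN W a).card •
        ∏ n, ENNReal.ofReal (residue N W n / ∑ i, residue N W i) ^
          (countLabel a n - floorCount N W n) := by
  rw [Finset.sum_congr rfl fun b _ => residualBase_singleton hN W b, ← Finset.sum_filter]
  have hcm : ((univ : Finset (Fin N → Fin N)).filter
        (fun b => ∀ n, countLabel b n = countLabel a n)).filter
      (fun b => ∀ j : Fin N, (j : ℕ) < ∑ n, floorCount N W n →
        b j = stackLabel N hN (floorCount N W) (j : ℕ))
      = classM N hN W a := by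
    rw [Finset.filter_filter, classM]
  rw [hcm]
  have hterm : ∀ b ∈ classM N hN W a,
      (∏ j ∈ univ.filter (fun j : Fin N => ¬ ((j : ℕ) < ∑ n, floorCount N W n)),
        ENNReal.ofReal (residue N W (b j) / ∑ i, residue N W i))
      = ∏ n, ENNReal.ofReal (residue N W n / ∑ i, residue N W i) ^
          (countLabel a n - floorCount N W n) := by
    intro b hb
    rw [← Finset.prod_fiberwise_of_maps_to (g := b) (t := univ)
      (fun j _ => Finset.mem_univ (b j))
      (fun j => ENNReal.ofReal (residue N W (b j) / ∑ i, residue N W i))]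
    refine Finset.prod_congr rfl fun n _ => ?_
    have hinner : ∀ j ∈ ((univ : Finset (Fin N)).filter
        (fun j : Fin N => ¬ ((j : ℕ) < ∑ n, floorCount N W n))).filter
        (fun j => b j = n),
        ENNReal.ofReal (residue N W (b j) / ∑ i, residue N W i)
          = ENNReal.ofReal (residue N W n / ∑ i, residue N W i) := by
      intro j hj
      rw [(Finset.mem_filter.mp hj).2]
    rw [Finset.prod_congr rfl hinner, Finset.prod_const,
      (classM_fibers hN W a b hb hFN n).1]
  rw [Finset.sum_congr rfl hterm, Finset.sum_const]

section PMF

variable {N : ℕ}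

lemma residue_nonneg (W : Fin N → ℝ) (hWpos : ∀ n, 0 < W n) (n : Fin N) :
    0 ≤ residue N W n := by
  have h0 : (0:ℝ) ≤ (N : ℝ) * W n := mul_nonneg (Nat.cast_nonneg N) (hWpos n).le
  have h1 := Nat.floor_le h0
  rw [residue, floorCount]
  linarith

lemma floor_sum_le (W : Fin N → ℝ) (hWpos : ∀ n, 0 < W n) (hWsum : ∑ n, W n = 1) :
    ∑ n, floorCount N W n ≤ N := by
  have hle : ∀ n, (floorCount N W n : ℝ) ≤ (N : ℝ) * W n := fun n =>
    Nat.floor_le (mul_nonneg (Nat.cast_nonneg N) (hWpos n).le)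
  have h1 : ((∑ n, floorCount N W n : ℕ) : ℝ) ≤ (N : ℝ) := by
    push_cast
    calc ∑ n, (floorCount N W n : ℝ) ≤ ∑ n, (N : ℝ) * W n :=
          Finset.sum_le_sum fun n _ => hle n
      _ = (N : ℝ) := by rw [← Finset.mul_sum, hWsum, mul_one]
  exact_mod_cast h1

lemma countLabel_sum (a : Fin N → Fin N) : ∑ n, countLabel a n = N := by
  have h := Finset.card_eq_sum_card_fiberwise (f := a) (s := univ) (t := univ)
    (fun x _ => mem_univ _)
  rw [Finset.card_univ, Fintype.card_fin] at h
  exact h.symm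

lemma residual_pmf (hN : 0 < N) (W : Fin N → ℝ) (hWpos : ∀ n, 0 < W n)
    (hWsum : ∑ n, W n = 1) (hR : 0 < ∑ n, residue N W n) (a : Fin N → Fin N) :
    residualLaw N W {a} =
      if ∀ n, floorCount N W n ≤ countLabel a n then
        ENNReal.ofReal
          (((Nat.factorial (N - ∑ n, floorCount N W n) : ℝ) / (Nat.factorial N : ℝ)) *
            ∏ n, ((residue N W n / ∑ j, residue N W j) ^
                (countLabel a n - floorCount N W n) *
              (Nat.factorial (countLabel a n) : ℝ) /
                (Nat.factorial (countLabel a n - floorCount N W n) : ℝ)))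
      else 0 := by
  classical
  have hq0 : ∀ n, 0 ≤ residue N W n / ∑ i, residue N W i := fun n =>
    div_nonneg (residue_nonneg W hWpos n) hR.le
  have hFN : ∑ n, floorCount N W n ≤ N := floor_sum_le W hWpos hWsum
  have hsumχ : ∑ n, countLabel a n = N := countLabel_sum a
  rw [residualLaw_singleton (W := W) a]
  have h2 : (∑ σ : Perm (Fin N), residualBase N W {a ∘ ⇑σ})
      = ((∏ n, Nat.factorial (countLabel a n) : ℕ) : ℝ≥0∞) *
        ∑ b ∈ (univ : Finset (Fin N → Fin N)).filter
          (fun b => ∀ n, countLabel b n = countLabel a n),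
          residualBase N W {b} := by
    rw [Finset.sum_comp (fun b : Fin N → Fin N => residualBase N W {b})
      (fun σ : Perm (Fin N) => a ∘ ⇑σ), PGaux.image_comp_eq a, Finset.mul_sum]
    refine Finset.sum_congr ?_ fun b hb => ?_
    · ext b
      simp only [Finset.mem_filter, Finset.mem_univ, true_and]
      exact Iff.rfl
    rw [Finset.mem_filter] at hb
    obtain ⟨σ0, rfl⟩ := PGaux.exists_comp_of_counts (f := a) (g := b) hb.2
    rw [PGaux.card_comp_eq a _ σ0 rfl, nsmul_eq_mul]
    have hpr : (∏ n, Nat.factorial (((univ : Finset (Fin N)).filter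
        fun x => (a ∘ ⇑σ0) x = n).card)) = ∏ n, Nat.factorial (countLabel a n) :=
      Finset.prod_congr rfl fun n _ =>
        congrArg Nat.factorial (PGaux.counts_comp a σ0 n)
    rw [hpr]
  rw [h2, class_sum hN W a hFN]
  by_cases hcle : ∀ n, floorCount N W n ≤ countLabel a n
  · rw [if_pos hcle]
    have hMf := classM_card hN W a hFN hsumχ hcle
    have hMreal : (((classM N hN W a).card : ℝ) *
        ∏ n, (Nat.factorial (countLabel a n - floorCount N W n) : ℝ))
        = (Nat.factorial (N - ∑ n, floorCount N W n) : ℝ) := by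
      exact_mod_cast hMf
    have hNfpos : (0:ℝ) < (Nat.factorial N : ℝ) := by
      exact_mod_cast Nat.factorial_pos N
    have hKpos : (0:ℝ) < ∏ n, (Nat.factorial (countLabel a n - floorCount N W n) : ℝ) :=
      Finset.prod_pos fun n _ => by exact_mod_cast Nat.factorial_pos _
    have hreal : ((Nat.factorial (N - ∑ n, floorCount N W n) : ℝ) / (Nat.factorial N : ℝ)) *
        ∏ n, ((residue N W n / ∑ j, residue N W j) ^ (countLabel a n - floorCount N W n) *
          (Nat.factorial (countLabel a n) : ℝ) /
            (Nat.factorial (countLabel a n - floorCount N W n) : ℝ))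
        = (((classM N hN W a).card : ℝ) * (∏ n, (Nat.factorial (countLabel a n) : ℝ)) *
            ∏ n, (residue N W n / ∑ j, residue N W j) ^ (countLabel a n - floorCount N W n))
          / (Nat.factorial N : ℝ) := by
      rw [Finset.prod_div_distrib, Finset.prod_mul_distrib, ← hMreal]
      field_simp
    rw [hreal, ENNReal.ofReal_div_of_pos hNfpos,
      ENNReal.ofReal_mul (by positivity), ENNReal.ofReal_mul (by positivity)]
    have hc1 : ENNReal.ofReal (((classM N hN W a).card : ℝ))
        = (((classM N hN W a).card : ℕ) : ℝ≥0∞) := ENNReal.ofReal_natCast _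
    have hc2 : ENNReal.ofReal (∏ n, (Nat.factorial (countLabel a n) : ℝ))
        = ((∏ n, Nat.factorial (countLabel a n) : ℕ) : ℝ≥0∞) := by
      rw [← Nat.cast_prod, ENNReal.ofReal_natCast]
    have hc3 : ENNReal.ofReal (∏ n, (residue N W n / ∑ j, residue N W j) ^
          (countLabel a n - floorCount N W n))
        = ∏ n, ENNReal.ofReal (residue N W n / ∑ i, residue N W i) ^
            (countLabel a n - floorCount N W n) := by
      rw [ENNReal.ofReal_prod_of_nonneg fun n _ => pow_nonneg (hq0 n) _]
      exact Finset.prod_congr rfl fun n _ => ENNReal.ofReal_pow (hq0 n) _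
    have hc4 : ENNReal.ofReal ((Nat.factorial N : ℝ))
        = ((Nat.factorial N : ℕ) : ℝ≥0∞) := ENNReal.ofReal_natCast _
    rw [hc1, hc2, hc3, hc4, nsmul_eq_mul, div_eq_mul_inv]
    ring
  · rw [if_neg hcle]
    have hM0 : classM N hN W a = ∅ := by
      rw [Finset.eq_empty_iff_forall_notMem]
      intro b hb
      exact hcle fun n => (classM_fibers hN W a b hb hFN n).2
    rw [hM0]
    simp

end PMF

section BCD

variable {N : ℕ}

lemma measurableSet_all {α : Type*} [MeasurableSpace α] [MeasurableSingletonClass α]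
    [Countable α] (s : Set α) : MeasurableSet s := by
  rw [← Set.biUnion_of_singleton s]
  exact MeasurableSet.biUnion (Set.to_countable s) fun b _ => measurableSet_singleton b

lemma residualLaw_perm (W : Fin N → ℝ) (τ : Perm (Fin N)) :
    (residualLaw N W).map (fun v => v ∘ ⇑τ) = residualLaw N W := by
  apply measure_ext_sing
  intro a
  rw [Measure.map_apply (measurable_of_countable _) (measurableSet_singleton a)]
  have hpre : (fun v : Fin N → Fin N => v ∘ ⇑τ) ⁻¹' {a} = {a ∘ ⇑τ⁻¹} := by
    ext v
    simp only [Set.mem_preimage, Set.mem_singleton_iff]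
    constructor
    · intro h
      funext x
      have := congrFun h (τ⁻¹ x)
      simpa using this
    · intro h
      subst h
      funext x
      simp
  rw [hpre, residualLaw_singleton, residualLaw_singleton]
  congr 1
  calc ∑ σ : Perm (Fin N), residualBase N W {(a ∘ ⇑τ⁻¹) ∘ ⇑σ}
      = ∑ σ : Perm (Fin N), residualBase N W {a ∘ ⇑((Equiv.mulLeft τ⁻¹) σ)} := by
        refine Finset.sum_congr rfl fun σ _ => ?_
        congr 1
    _ = ∑ σ : Perm (Fin N), residualBase N W {a ∘ ⇑σ} :=
        Equiv.sum_comp (Equiv.mulLeft τ⁻¹) fun σ => residualBase N W {a ∘ ⇑σ}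

lemma multinomial_total (W : Fin N → ℝ) (hWpos : ∀ n, 0 < W n)
    (hR : 0 < ∑ n, residue N W n) :
    ∑ m, ENNReal.ofReal (residue N W m / ∑ i, residue N W i) = 1 := by
  rw [← ENNReal.ofReal_sum_of_nonneg fun m _ =>
    div_nonneg (residue_nonneg W hWpos m) hR.le]
  rw [← Finset.sum_div, div_self hR.ne']
  exact ENNReal.ofReal_one

lemma residualBase_slot (hN : 0 < N) (W : Fin N → ℝ) (hWpos : ∀ n, 0 < W n)
    (hR : 0 < ∑ n, residue N W n) (i n : Fin N) :
    residualBase N W {v : Fin N → Fin N | v i = n} =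
      if (i : ℕ) < ∑ m, floorCount N W m then
        (if stackLabel N hN (floorCount N W) (i : ℕ) = n then 1 else 0)
      else ENNReal.ofReal (residue N W n / ∑ m, residue N W m) := by
  haveI := fun j => base_factor_finite hN W j
  rw [residualBase, dif_pos hN]
  have hset : {v : Fin N → Fin N | v i = n}
      = Set.pi Set.univ (fun j => if j = i then {n} else Set.univ) := by
    ext v
    simp only [Set.mem_setOf_eq, Set.mem_pi, Set.mem_univ, true_implies]
    constructor
    · intro h j
      by_cases hj : j = i
      · subst hj; simp [h]
      · simp [hj]
    · intro h
      have := h i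
      simpa using this
  rw [hset, Measure.pi_pi]
  rw [Finset.prod_eq_single i ?_ (by simp)]
  · simp only [eq_self_iff_true, if_true]
    split
    · rw [Measure.dirac_apply]
      by_cases hs : stackLabel N hN (floorCount N W) (i : ℕ) = n
      · simp [hs]
      · simp [Set.indicator, hs]
    · rw [sum_smul_dirac_singleton]
  · intro j _ hji
    rw [if_neg hji]
    split
    · simp
    · rw [sum_smul_dirac_univ, multinomial_total W hWpos hR]

lemma residual_marginal (hN : 0 < N) (W : Fin N → ℝ) (hWpos : ∀ n, 0 < W n)
    (hWsum : ∑ n, W n = 1) (hR : 0 < ∑ n, residue N W n) (j n : Fin N) :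
    residualLaw N W {v : Fin N → Fin N | v j = n} = ENNReal.ofReal (W n) := by
  classical
  have hFN : ∑ m, floorCount N W m ≤ N := floor_sum_le W hWpos hWsum
  -- all slots have the same marginal
  have hslot : ∀ i : Fin N, residualLaw N W {v : Fin N → Fin N | v i = n}
      = residualLaw N W {v : Fin N → Fin N | v j = n} := by
    intro i
    conv_lhs => rw [← residualLaw_perm W (Equiv.swap j i)]
    rw [Measure.map_apply (measurable_of_countable _) (measurableSet_all _)]
    congr 1
    ext v
    simp [Equiv.swap_apply_left]
  -- sum over slots of the law marginal equals sum of base marginals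
  have hsum : ∑ i : Fin N, residualLaw N W {v : Fin N → Fin N | v i = n}
      = ∑ i : Fin N, residualBase N W {v : Fin N → Fin N | v i = n} := by
    have h1 : ∀ i : Fin N, residualLaw N W {v : Fin N → Fin N | v i = n}
        = ((N.factorial : ℝ≥0∞))⁻¹ * ∑ σ : Perm (Fin N),
            residualBase N W {v : Fin N → Fin N | v (σ i) = n} := by
      intro i
      rw [residualLaw_apply (W := W) _ (measurableSet_all _)]
      congr 1
    rw [Finset.sum_congr rfl fun i _ => h1 i, ← Finset.mul_sum, Finset.sum_comm]
    have h3 : ∀ σ : Perm (Fin N),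
        (∑ i : Fin N, residualBase N W {v : Fin N → Fin N | v (σ i) = n})
        = ∑ i : Fin N, residualBase N W {v : Fin N → Fin N | v i = n} := fun σ =>
      Equiv.sum_comp σ fun i => residualBase N W {v : Fin N → Fin N | v i = n}
    rw [Finset.sum_congr rfl fun σ _ => h3 σ, Finset.sum_const, Finset.card_univ,
      Fintype.card_perm, Fintype.card_fin, nsmul_eq_mul, ← mul_assoc,
      ENNReal.inv_mul_cancel (by exact_mod_cast (Nat.factorial_pos N).ne')
        (ENNReal.natCast_ne_top _), one_mul]
  -- compute the base sum
  have hbase : ∑ i : Fin N, residualBase N W {v : Fin N → Fin N | v i = n}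
      = ((floorCount N W n : ℝ≥0∞))
        + ((N - ∑ m, floorCount N W m : ℕ) : ℝ≥0∞) *
            ENNReal.ofReal (residue N W n / ∑ m, residue N W m) := by
    rw [Finset.sum_congr rfl fun i _ => residualBase_slot hN W hWpos hR i n]
    rw [← Finset.sum_filter_add_sum_filter_not univ
      (fun i : Fin N => (i : ℕ) < ∑ m, floorCount N W m)]
    congr 1
    · have h4 : ∀ i ∈ univ.filter (fun i : Fin N => (i : ℕ) < ∑ m, floorCount N W m),
          (if (i : ℕ) < ∑ m, floorCount N W m then
            (if stackLabel N hN (floorCount N W) (i : ℕ) = n then (1:ℝ≥0∞) else 0)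
          else ENNReal.ofReal (residue N W n / ∑ m, residue N W m))
          = (if stackLabel N hN (floorCount N W) (i : ℕ) = n then (1:ℝ≥0∞) else 0) := by
        intro i hi
        rw [mem_filter] at hi
        rw [if_pos hi.2]
      rw [Finset.sum_congr rfl h4, Finset.sum_boole]
      norm_cast
      exact stack_fiber_fin hN (floorCount N W) hFN n
    · have h5 : ∀ i ∈ univ.filter (fun i : Fin N => ¬ ((i : ℕ) < ∑ m, floorCount N W m)),
          (if (i : ℕ) < ∑ m, floorCount N W m then
            (if stackLabel N hN (floorCount N W) (i : ℕ) = n then (1:ℝ≥0∞) else 0)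
          else ENNReal.ofReal (residue N W n / ∑ m, residue N W m))
          = ENNReal.ofReal (residue N W n / ∑ m, residue N W m) := by
        intro i hi
        rw [mem_filter] at hi
        rw [if_neg hi.2]
      rw [Finset.sum_congr rfl h5, Finset.sum_const, nsmul_eq_mul]
      congr 2
      have h6 := Finset.card_filter_add_card_filter_not
        (s := (univ : Finset (Fin N))) (fun i : Fin N => (i : ℕ) < ∑ m, floorCount N W m)
      rw [card_val_lt hFN, Finset.card_univ, Fintype.card_fin] at h6
      omega
  -- identify with N * W n
  have hres_sum : ∑ m, residue N W m
      = (N : ℝ) - ((∑ m, floorCount N W m : ℕ) : ℝ) := by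
    have : ∑ m, residue N W m = ∑ m, ((N : ℝ) * W m - (floorCount N W m : ℝ)) :=
      Finset.sum_congr rfl fun m _ => rfl
    rw [this, Finset.sum_sub_distrib, ← Finset.mul_sum, hWsum, mul_one]
    push_cast
    ring
  have hNF : ((N - ∑ m, floorCount N W m : ℕ) : ℝ) = ∑ m, residue N W m := by
    rw [hres_sum]
    push_cast [Nat.cast_sub hFN]
    ring
  have htail : ((N - ∑ m, floorCount N W m : ℕ) : ℝ≥0∞) *
      ENNReal.ofReal (residue N W n / ∑ m, residue N W m)
      = ENNReal.ofReal (residue N W n) := by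
    rw [← ENNReal.ofReal_natCast, ← ENNReal.ofReal_mul (Nat.cast_nonneg _)]
    congr 1
    rw [hNF]
    field_simp
  have hfin : ∑ i : Fin N, residualBase N W {v : Fin N → Fin N | v i = n}
      = (N : ℝ≥0∞) * ENNReal.ofReal (W n) := by
    rw [hbase, htail]
    rw [← ENNReal.ofReal_natCast (floorCount N W n),
      ← ENNReal.ofReal_add (Nat.cast_nonneg _) (residue_nonneg W hWpos n),
      ← ENNReal.ofReal_natCast N, ← ENNReal.ofReal_mul (Nat.cast_nonneg _)]
    congr 1
    rw [residue]
    ring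
  have hN' : (∑ i : Fin N, residualLaw N W {v : Fin N → Fin N | v i = n})
      = (N : ℝ≥0∞) * residualLaw N W {v : Fin N → Fin N | v j = n} := by
    rw [Finset.sum_congr rfl fun i _ => hslot i, Finset.sum_const, Finset.card_univ,
      Fintype.card_fin, nsmul_eq_mul]
  have := hN'.symm.trans (hsum.trans hfin)
  exact (ENNReal.mul_right_inj (by exact_mod_cast hN.ne') (ENNReal.natCast_ne_top N)).mp this

end BCD

section CD

variable {N : ℕ}

lemma residual_cycle (hN : 0 < N) (W : Fin N → ℝ) (k : Fin N) :
    (residualLaw N W).map (fun a => fun n => a (n + k)) = residualLaw N W := by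
  haveI : NeZero N := ⟨hN.ne'⟩
  have h : (fun a : Fin N → Fin N => fun n => a (n + k))
      = fun v : Fin N → Fin N => v ∘ ⇑(Equiv.addRight k) := rfl
  rw [h, residualLaw_perm]

lemma countLabel_shift [NeZero N] (a : Fin N → Fin N) (k m : Fin N) :
    countLabel (fun n => a n + k) m = countLabel a (m - k) := by
  show ((univ : Finset (Fin N)).filter fun j => a j + k = m).card
    = ((univ : Finset (Fin N)).filter fun j => a j = m - k).card
  refine congrArg Finset.card (Finset.filter_congr fun j _ => ?_)
  exact (eq_sub_iff_add_eq).symm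

lemma residual_shift (hN : 0 < N) (W : Fin N → ℝ) (hWpos : ∀ n, 0 < W n)
    (hWsum : ∑ n, W n = 1) (hR : 0 < ∑ n, residue N W n) (k : Fin N) :
    (residualLaw N W).map (fun a => fun n => a n - k)
      = residualLaw N (fun n => W (n + k)) := by
  haveI : NeZero N := ⟨hN.ne'⟩
  have hWpos' : ∀ n : Fin N, 0 < W (n + k) := fun n => hWpos _
  have hWsum' : ∑ n : Fin N, W (n + k) = 1 := by
    rw [← hWsum]
    exact Fintype.sum_equiv (Equiv.addRight k) _ _ fun n => rfl
  have hsr : ∑ j, residue N W j = ∑ j, residue N (fun m => W (m + k)) j :=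
    (Fintype.sum_equiv (Equiv.addRight k) _ _ fun n => rfl).symm
  have hsf : ∑ n, floorCount N W n = ∑ n, floorCount N (fun m => W (m + k)) n :=
    (Fintype.sum_equiv (Equiv.addRight k) _ _ fun n => rfl).symm
  have hR' : 0 < ∑ n, residue N (fun m => W (m + k)) n := by
    rw [← hsr]; exact hR
  apply measure_ext_sing
  intro a
  rw [Measure.map_apply (measurable_of_countable _) (measurableSet_singleton a)]
  have hpre : (fun v : Fin N → Fin N => fun n => v n - k) ⁻¹' {a} = {fun n => a n + k} := by
    ext v
    simp only [Set.mem_preimage, Set.mem_singleton_iff, funext_iff]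
    constructor
    · intro h n
      rw [← h n]
      simp [sub_add_cancel]
    · intro h n
      rw [h n]
      simp [add_sub_cancel_right]
  rw [hpre, residual_pmf hN W hWpos hWsum hR _,
    residual_pmf hN _ hWpos' hWsum' hR' a]
  have hcount : ∀ m, countLabel (fun n => a n + k) m = countLabel a (m - k) :=
    countLabel_shift a k
  have hfloor' : ∀ n : Fin N, floorCount N (fun m => W (m + k)) n = floorCount N W (n + k) :=
    fun n => rfl
  have hcond : (∀ n, floorCount N W n ≤ countLabel (fun n => a n + k) n)
      ↔ (∀ n, floorCount N (fun m => W (m + k)) n ≤ countLabel a n) := by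
    constructor
    · intro h n
      have h2 := h (n + k)
      rw [hcount (n + k), add_sub_cancel_right] at h2
      exact h2
    · intro h m
      rw [hcount m]
      have h2 := h (m - k)
      rw [hfloor' (m - k), sub_add_cancel] at h2
      exact h2
  by_cases hc : ∀ n, floorCount N (fun m => W (m + k)) n ≤ countLabel a n
  · rw [if_pos hc, if_pos (hcond.mpr hc)]
    congr 1
    rw [hsf]
    congr 1
    refine (Fintype.prod_equiv (Equiv.addRight k) _ _ fun n => ?_).symm
    show (residue N (fun m => W (m + k)) n / ∑ j, residue N (fun m => W (m + k)) j) ^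
          (countLabel a n - floorCount N (fun m => W (m + k)) n) *
        ((countLabel a n).factorial : ℝ) /
          ((countLabel a n - floorCount N (fun m => W (m + k)) n).factorial : ℝ)
      = (residue N W (n + k) / ∑ j, residue N W j) ^
          (countLabel (fun n => a n + k) (n + k) - floorCount N W (n + k)) *
        ((countLabel (fun n => a n + k) (n + k)).factorial : ℝ) /
          ((countLabel (fun n => a n + k) (n + k) - floorCount N W (n + k)).factorial : ℝ)
    rw [hcount (n + k), add_sub_cancel_right, hsr, hfloor' n]
    rfl
  · rw [if_neg hc, if_neg (fun h => hc (hcond.mp h))]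

end CD

end ResidualAux

/-- Residual resampling followed by a uniformly random permutation: (a) its pmf is the
stated multinomial-residual formula, and (b) it satisfies Assumption (R) (marginal
unbiasedness and cycle invariance). -/
theorem residual_resampling_pmf_and_assumption_R
    (N : ℕ) (hN : 0 < N) (W : Fin N → ℝ)
    (hWpos : ∀ n, 0 < W n) (hWsum : ∑ n, W n = 1)
    (hR : 0 < ∑ n, residue N W n) :
    (∀ a : Fin N → Fin N,
      residualLaw N W {a} =
        if ∀ n, floorCount N W n ≤ countLabel a n then
          ENNReal.ofReal
            (((Nat.factorial (N - ∑ n, floorCount N W n) : ℝ) / (Nat.factorial N : ℝ)) *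
              ∏ n, ((residue N W n / ∑ j, residue N W j) ^
                  (countLabel a n - floorCount N W n) *
                (Nat.factorial (countLabel a n) : ℝ) /
                  (Nat.factorial (countLabel a n - floorCount N W n) : ℝ)))
        else 0) ∧
    (∀ j n : Fin N, residualLaw N W {v | v j = n} = ENNReal.ofReal (W n)) ∧
    (∀ k : Fin N, (residualLaw N W).map (fun a => fun n => a (n + k)) = residualLaw N W) ∧
    (∀ k : Fin N, (residualLaw N W).map (fun a => fun n => a n - k) =
      residualLaw N fun n => W (n + k)) := by
  exact ⟨fun a => residual_pmf hN W hWpos hWsum hR a,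
    fun j n => residual_marginal hN W hWpos hWsum hR j n,
    fun k => residual_cycle hN W k,
    fun k => residual_shift hN W hWpos hWsum hR k⟩

end ParticleGibbs
end
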